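/- arXiv:2007.03798 — 5 statements merged into one kernel-verified Lean document; each statement's English description precedes it below -/
import Mathlib

section
/- Let H be a real Hilbert space and let f, g ∈ Γ0(H). If prox_f(x) = prox_g(x) for all x ∈ H, then f and g differ by a constant, i.e., there exists c ∈ ℝ such that f(x) = g(x) + c for all x ∈ H. -/
open scoped InnerProductSpace
noncomputable section

variable {H : Type*} [NormedAddCommGroup H] [InnerProductSpace ℝ H] [CompleteSpace H]

/-- Convexity for extended-real-valued functions on a real Hilbert space. -/
def ERealConvexOn (f : H → EReal) : Prop :=
  ∀ x y : H, ∀ a b : ℝ, 0 ≤ a → 0 ≤ b → a + b = 1 →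
    f (a • x + b • y) ≤ (a : EReal) * f x + (b : EReal) * f y

/-- `f ∈ Γ₀(H)`: proper (never `⊥`, not identically `⊤`), convex and lower semicontinuous. -/
def Gamma0 (f : H → EReal) : Prop :=
  (∃ x, f x ≠ ⊤) ∧ (∀ x, f x ≠ ⊥) ∧ ERealConvexOn f ∧ LowerSemicontinuous f

/-- `p` is the proximal point of `f` at `x`, i.e. `p` minimizes `y ↦ f y + (1/2)‖x - y‖²`. -/
def IsProx (f : H → EReal) (x p : H) : Prop :=
  ∀ y : H, f p + (((1:ℝ)/2 * ‖x - p‖ ^ 2 : ℝ) : EReal)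
    ≤ f y + (((1:ℝ)/2 * ‖x - y‖ ^ 2 : ℝ) : EReal)

/-- The Fenchel (Legendre-Fenchel) conjugate of `f`. -/
def fenchel (f : H → EReal) (p : H) : EReal :=
  ⨆ v : H, ((⟪p, v⟫_ℝ : ℝ) : EReal) - f v

open Filter

lemma ecases (a : EReal) (h : a ≠ ⊥) : a = ⊤ ∨ ∃ r : ℝ, a = r := by
  induction a using EReal.rec with
  | bot => exact absurd rfl h
  | coe r => exact Or.inr ⟨r, rfl⟩
  | top => exact Or.inl rfl

/-- finiteness of value at a weighted prox point -/
lemma prox_val_finite (f : H → EReal) (hne : ∀ z, f z ≠ ⊥) (x₀ : H) (hx₀ : f x₀ ≠ ⊤)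
    (lam : ℝ) (x p : H)
    (hp : ∀ y : H, f p + ((lam/2 * ‖x - p‖ ^ 2 : ℝ) : EReal)
      ≤ f y + ((lam/2 * ‖x - y‖ ^ 2 : ℝ) : EReal)) :
    ∃ r : ℝ, f p = (r : EReal) := by
  rcases ecases (f p) (hne p) with hT | h
  · exfalso
    rcases ecases (f x₀) (hne x₀) with hT' | ⟨s, hs⟩
    · exact hx₀ hT'
    · have := hp x₀
      rw [hT, hs, EReal.top_add_coe] at this
      have : ((s + lam/2 * ‖x - x₀‖ ^ 2 : ℝ) : EReal) = ⊤ := top_le_iff.mp (this.trans_eq (by norm_cast))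
      exact (EReal.coe_ne_top _) this
  · exact h

/-- from weighted prox minimality to the subgradient inequality -/
lemma prox_subgrad (f : H → EReal) (hconv : ERealConvexOn f)
    (lam : ℝ) (hlam : 0 < lam) (x p : H) (r : ℝ) (hr : f p = (r : EReal))
    (hp : ∀ y : H, f p + ((lam/2 * ‖x - p‖ ^ 2 : ℝ) : EReal)
      ≤ f y + ((lam/2 * ‖x - y‖ ^ 2 : ℝ) : EReal)) :
    ∀ z : H, ((r + ⟪lam • (x - p), z - p⟫_ℝ : ℝ) : EReal) ≤ f z := by
  intro z
  have hzb : f z ≠ ⊥ := by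
    intro hb
    have := hp z
    rw [hb, hr, EReal.bot_add, ← EReal.coe_add] at this
    exact (EReal.coe_ne_bot _) (le_bot_iff.mp this)
  rcases ecases (f z) hzb with hT | ⟨s, hs⟩
  · rw [hT]; exact le_top
  · rw [hs]
    norm_cast
    rw [real_inner_smul_left]
    have key : ∀ t : ℝ, 0 < t → t ≤ 1 → r + lam * ⟪x - p, z - p⟫_ℝ ≤ s + t * (lam/2 * ‖z - p‖^2) := by
      intro t ht ht1
      have hconvt := hconv p z (1 - t) t (by linarith) (le_of_lt ht) (by ring)
      rw [hr, hs] at hconvt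
      have hconvt' : f ((1-t) • p + t • z) ≤ (((1-t)*r + t*s : ℝ) : EReal) := by
        refine hconvt.trans_eq ?_
        norm_cast
      have hmin := hp ((1-t) • p + t • z)
      rw [hr] at hmin
      have hmin2 : ((r + lam/2 * ‖x - p‖ ^ 2 : ℝ) : EReal)
          ≤ (((1-t)*r + t*s + lam/2 * ‖x - ((1-t) • p + t • z)‖ ^ 2 : ℝ) : EReal) := by
        calc ((r + lam/2 * ‖x - p‖ ^ 2 : ℝ) : EReal)
            = (r:EReal) + ((lam/2 * ‖x - p‖ ^ 2 : ℝ) : EReal) := by norm_cast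
          _ ≤ f ((1-t) • p + t • z) + ((lam/2 * ‖x - ((1-t) • p + t • z)‖ ^ 2 : ℝ) : EReal) := hmin
          _ ≤ (((1-t)*r + t*s : ℝ) : EReal) + ((lam/2 * ‖x - ((1-t) • p + t • z)‖ ^ 2 : ℝ) : EReal) := by
              exact add_le_add hconvt' le_rfl
          _ = _ := by norm_cast
      have hreal : r + lam/2 * ‖x - p‖ ^ 2
          ≤ (1-t)*r + t*s + lam/2 * ‖x - ((1-t) • p + t • z)‖ ^ 2 := by exact_mod_cast hmin2
      have hxe : x - ((1-t) • p + t • z) = (x - p) - t • (z - p) := by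
        rw [sub_smul, one_smul, smul_sub]; abel
      rw [hxe] at hreal
      have hnorm : ‖(x - p) - t • (z - p)‖ ^ 2
          = ‖x - p‖^2 - 2 * t * ⟪x - p, z - p⟫_ℝ + t^2 * ‖z - p‖^2 := by
        rw [norm_sub_sq_real, real_inner_smul_right, norm_smul]
        simp [mul_pow, abs_of_pos ht]
        ring
      rw [hnorm] at hreal
      have h2 : t * (r + lam * ⟪x - p, z - p⟫_ℝ) ≤ t * (s + t * (lam/2 * ‖z - p‖^2)) := by
        nlinarith [hreal]
      exact le_of_mul_le_mul_left (by linarith [h2]) ht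
    -- take t → 0
    by_contra hlt
    push_neg at hlt
    set ε := r + lam * ⟪x - p, z - p⟫_ℝ - s with hε
    have hε0 : 0 < ε := by linarith
    have hK : 0 ≤ lam/2 * ‖z - p‖^2 := by positivity
    set K := lam/2 * ‖z - p‖^2 with hKdef
    have ht := key (min 1 (ε / (2 * (K + 1)))) (by positivity) (min_le_left _ _)
    have hle : min 1 (ε / (2 * (K + 1))) * K ≤ ε / 2 := by
      have h1 : min 1 (ε / (2 * (K + 1))) ≤ ε / (2 * (K + 1)) := min_le_right _ _
      have : ε / (2 * (K + 1)) * K ≤ ε / 2 := by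
        rw [div_mul_eq_mul_div, div_le_div_iff₀ (by positivity) (by norm_num)]
        nlinarith
      nlinarith [mul_le_mul_of_nonneg_right h1 hK]
    linarith

/-- subgradient implies prox -/
lemma subgrad_prox (f : H → EReal) (p u : H) (r : ℝ) (hr : f p = (r : EReal))
    (hs : ∀ z : H, ((r + ⟪u, z - p⟫_ℝ : ℝ) : EReal) ≤ f z) :
    IsProx f (p + u) p := by
  intro z
  rcases ecases (f z) (fun hb => by simpa [hb] using (hs z).trans_eq hb) with hT | ⟨s, hs'⟩
  · rw [hT, EReal.top_add_coe]; exact le_top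
  · have h1 : r + ⟪u, z - p⟫_ℝ ≤ s := by
      have := hs z; rw [hs'] at this; exact_mod_cast this
    rw [hr, hs', ← EReal.coe_add, ← EReal.coe_add, EReal.coe_le_coe_iff]
    have e1 : p + u - p = u := by abel
    have e2 : p + u - z = u - (z - p) := by abel
    rw [e1, e2, norm_sub_sq_real]
    nlinarith [sq_nonneg (‖z - p‖), norm_sub_sq_real u (z-p)]

/-- uniqueness of prox points -/
lemma prox_unique (f : H → EReal) (hconv : ERealConvexOn f) (hne : ∀ z, f z ≠ ⊥)
    (x₀ : H) (hx₀ : f x₀ ≠ ⊤) (x p q : H)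
    (hp : IsProx f x p) (hq : IsProx f x q) : p = q := by
  obtain ⟨r, hr⟩ := prox_val_finite f hne x₀ hx₀ 1 x p hp
  obtain ⟨s, hs⟩ := prox_val_finite f hne x₀ hx₀ 1 x q hq
  have h1 : r + (1:ℝ)/2 * ‖x - p‖^2 ≤ s + (1:ℝ)/2 * ‖x - q‖^2 := by
    have := hp q; rw [hr, hs, ← EReal.coe_add, ← EReal.coe_add] at this; exact_mod_cast this
  have h2 : s + (1:ℝ)/2 * ‖x - q‖^2 ≤ r + (1:ℝ)/2 * ‖x - p‖^2 := by
    have := hq p; rw [hr, hs, ← EReal.coe_add, ← EReal.coe_add] at this; exact_mod_cast this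
  set w : H := (1/2 : ℝ) • p + (1/2 : ℝ) • q with hw
  have hcv := hconv p q (1/2) (1/2) (by norm_num) (by norm_num) (by norm_num)
  rw [hr, hs] at hcv
  have hcv' : f w ≤ (((r+s)/2 : ℝ) : EReal) := by
    refine hcv.trans_eq ?_
    norm_cast
    push_cast
    ring
  have hmin := hp w
  rw [hr] at hmin
  have hmin2 : ((r + (1:ℝ)/2 * ‖x - p‖ ^ 2 : ℝ) : EReal)
      ≤ (((r+s)/2 + (1:ℝ)/2 * ‖x - w‖ ^ 2 : ℝ) : EReal) := by
    calc ((r + (1:ℝ)/2 * ‖x - p‖ ^ 2 : ℝ) : EReal)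
        = (r:EReal) + (((1:ℝ)/2 * ‖x - p‖ ^ 2 : ℝ) : EReal) := by norm_cast
      _ ≤ f w + (((1:ℝ)/2 * ‖x - w‖ ^ 2 : ℝ) : EReal) := hmin
      _ ≤ (((r+s)/2 : ℝ) : EReal) + (((1:ℝ)/2 * ‖x - w‖ ^ 2 : ℝ) : EReal) := add_le_add hcv' le_rfl
      _ = _ := by norm_cast
  have hreal : r + (1:ℝ)/2 * ‖x - p‖ ^ 2 ≤ (r+s)/2 + (1:ℝ)/2 * ‖x - w‖ ^ 2 := by exact_mod_cast hmin2
  have hxw : x - w = (1/2 : ℝ) • ((x - p) + (x - q)) := by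
    rw [hw]; rw [smul_add]; rw [smul_sub, smul_sub]
    have : x = (1/2:ℝ) • x + (1/2:ℝ) • x := by
      rw [← add_smul]; norm_num
    nth_rewrite 1 [this]; abel
  have hxw2 : ‖x - w‖^2 = (1/4:ℝ) * ‖(x - p) + (x - q)‖^2 := by
    rw [hxw, norm_smul, Real.norm_eq_abs, mul_pow]
    norm_num
  have hpq2 : ‖p - q‖^2 = ‖(x - q) - (x - p)‖^2 := by rw [show (x-q)-(x-p) = p - q by abel]
  have ha := norm_add_sq_real (x-p) (x-q)
  have hb := norm_sub_sq_real (x-q) (x-p)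
  have hic := real_inner_comm (x-p) (x-q)
  have : ‖p - q‖^2 ≤ 0 := by nlinarith [hreal, hxw2]
  have : ‖p - q‖ = 0 := by nlinarith [sq_nonneg (‖p-q‖), norm_nonneg (p-q)]
  have := norm_eq_zero.mp this
  have : p = q := by rwa [sub_eq_zero] at this
  exact this

lemma fin_of_le (a : EReal) (ha : a ≠ ⊥) (r : ℝ) (hle : a ≤ (r : EReal)) :
    ∃ s : ℝ, a = (s : EReal) := by
  rcases ecases a ha with hT | hfin
  · rw [hT] at hle; exact absurd hle (by simp)
  · exact hfin

lemma fin_of_add_le (a : EReal) (ha : a ≠ ⊥) (q r : ℝ) (hle : a + (q : EReal) ≤ (r : EReal)) :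
    ∃ s : ℝ, a = (s : EReal) := by
  rcases ecases a ha with hT | hfin
  · rw [hT, EReal.top_add_coe] at hle; exact absurd hle (by simp)
  · exact hfin

lemma parallelogram_mid (y zj zk : H) :
    ‖y - ((1/2:ℝ) • zj + (1/2:ℝ) • zk)‖^2
      = (1/2:ℝ)*‖y - zj‖^2 + (1/2:ℝ)*‖y - zk‖^2 - (1/4:ℝ)*‖zj - zk‖^2 := by
  have hxw : y - ((1/2:ℝ) • zj + (1/2:ℝ) • zk) = (1/2 : ℝ) • ((y - zj) + (y - zk)) := by
    rw [smul_add, smul_sub, smul_sub]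
    have : y = (1/2:ℝ) • y + (1/2:ℝ) • y := by rw [← add_smul]; norm_num
    nth_rewrite 1 [this]; abel
  have hpq2 : ‖zj - zk‖^2 = ‖(y - zk) - (y - zj)‖^2 := by
    rw [show (y-zk)-(y-zj) = zj - zk by abel]
  have hxw2 : ‖y - ((1/2:ℝ) • zj + (1/2:ℝ) • zk)‖^2 = (1/4:ℝ) * ‖(y - zj) + (y - zk)‖^2 := by
    rw [hxw, norm_smul, Real.norm_eq_abs, mul_pow]; norm_num
  have ha := norm_add_sq_real (y-zj) (y-zk)
  have hb := norm_sub_sq_real (y-zk) (y-zj)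
  have hic := real_inner_comm (y-zj) (y-zk)
  rw [hxw2, hpq2]
  nlinarith [ha, hb, hic]

/-- Existence of weighted proximal points. -/
lemma exists_weighted_prox (g : H → EReal)
    (hne : ∀ z, g z ≠ ⊥) (hconv : ERealConvexOn g) (hlsc : LowerSemicontinuous g)
    (p₀ u₀ : H) (β : ℝ) (hminor : ∀ z, ((β + ⟪u₀, z - p₀⟫_ℝ : ℝ) : EReal) ≤ g z)
    (lam : ℝ) (hlam : 0 < lam) (y : H) (t : ℝ) (hy : g y = (t : EReal)) :
    ∃ p : H, ∀ z : H, g p + ((lam/2 * ‖y - p‖ ^ 2 : ℝ) : EReal)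
      ≤ g z + ((lam/2 * ‖y - z‖ ^ 2 : ℝ) : EReal) := by
  set T : Set ℝ := {r | ∃ z, g z + ((lam/2 * ‖y - z‖ ^ 2 : ℝ) : EReal) ≤ (r : EReal)} with hT
  have htmem : t ∈ T := by
    refine ⟨y, ?_⟩
    rw [hy, sub_self, norm_zero, ← EReal.coe_add]
    norm_num
  have hTbdd : BddBelow T := by
    refine ⟨β + ⟪u₀, y - p₀⟫_ℝ - ‖u₀‖^2/(2*lam), ?_⟩
    rintro r ⟨z, hz⟩
    have h1 : ((β + ⟪u₀, z - p₀⟫_ℝ + lam/2 * ‖y - z‖ ^ 2 : ℝ) : EReal) ≤ (r : EReal) := by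
      calc ((β + ⟪u₀, z - p₀⟫_ℝ + lam/2 * ‖y - z‖ ^ 2 : ℝ) : EReal)
          = ((β + ⟪u₀, z - p₀⟫_ℝ : ℝ) : EReal) + ((lam/2 * ‖y - z‖ ^ 2 : ℝ) : EReal) := by norm_cast
        _ ≤ g z + ((lam/2 * ‖y - z‖ ^ 2 : ℝ) : EReal) := add_le_add (hminor z) le_rfl
        _ ≤ (r : EReal) := hz
    have h1' : β + ⟪u₀, z - p₀⟫_ℝ + lam/2 * ‖y - z‖ ^ 2 ≤ r := by exact_mod_cast h1
    have hsplit : ⟪u₀, z - p₀⟫_ℝ = ⟪u₀, y - p₀⟫_ℝ + ⟪u₀, z - y⟫_ℝ := by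
      rw [← inner_add_right]
      congr 1
      abel
    have habs : |⟪u₀, z - y⟫_ℝ| ≤ ‖u₀‖ * ‖z - y‖ := abs_real_inner_le_norm _ _
    have hnn : ‖y - z‖ = ‖z - y‖ := norm_sub_rev _ _
    rw [hsplit, hnn] at h1'
    have key : 0 ≤ lam/2 * ‖z-y‖^2 - ‖u₀‖*‖z-y‖ + ‖u₀‖^2/(2*lam) := by
      have h2 : lam/2 * ‖z-y‖^2 - ‖u₀‖*‖z-y‖ + ‖u₀‖^2/(2*lam) = (lam*‖z-y‖-‖u₀‖)^2/(2*lam) := by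
        field_simp
        ring
      rw [h2]
      positivity
    linarith [neg_le_of_abs_le habs, key, h1']
  set m := sInf T with hm
  have hm_le : ∀ z : H, (m : EReal) ≤ g z + ((lam/2 * ‖y - z‖ ^ 2 : ℝ) : EReal) := by
    intro z
    rcases ecases (g z) (hne z) with hTz | ⟨s, hs⟩
    · rw [hTz, EReal.top_add_coe]; exact le_top
    · rw [hs, ← EReal.coe_add]
      have : s + lam/2 * ‖y - z‖ ^ 2 ∈ T := ⟨z, by rw [hs, ← EReal.coe_add]⟩
      exact_mod_cast csInf_le hTbdd this
  have hseq : ∀ k : ℕ, ∃ z : H, ∃ s : ℝ, g z = (s : EReal)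
      ∧ s + lam/2 * ‖y - z‖ ^ 2 < m + 1/((k:ℝ)+1) := by
    intro k
    have hlt : m < m + 1/((k:ℝ)+1) := by
      have : (0:ℝ) < 1/((k:ℝ)+1) := by positivity
      linarith
    obtain ⟨r, hrT, hrlt⟩ := exists_lt_of_csInf_lt ⟨t, htmem⟩ hlt
    obtain ⟨z, hz⟩ := hrT
    obtain ⟨s, hs⟩ := fin_of_add_le (g z) (hne z) _ _ hz
    refine ⟨z, s, hs, ?_⟩
    rw [hs, ← EReal.coe_add] at hz
    have : s + lam/2 * ‖y - z‖ ^ 2 ≤ r := by exact_mod_cast hz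
    linarith
  choose z s hzs hslt using hseq
  have hml : ∀ k : ℕ, m ≤ s k + lam/2 * ‖y - z k‖ ^ 2 := by
    intro k
    have := hm_le (z k)
    rw [hzs k, ← EReal.coe_add] at this
    exact_mod_cast this
  -- Cauchy estimate
  have hcau : ∀ j k : ℕ, ‖z j - z k‖^2 ≤ (4/lam) * (1/((j:ℝ)+1) + 1/((k:ℝ)+1)) := by
    intro j k
    set w : H := (1/2:ℝ) • z j + (1/2:ℝ) • z k with hw
    have hcv := hconv (z j) (z k) (1/2) (1/2) (by norm_num) (by norm_num) (by norm_num)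
    rw [hzs j, hzs k] at hcv
    have hcv' : g w ≤ (((s j + s k)/2 : ℝ) : EReal) := by
      refine hcv.trans_eq ?_
      norm_cast
      push_cast
      ring
    obtain ⟨sw, hsw⟩ := fin_of_le (g w) (hne w) _ hcv'
    have hsw2 : sw ≤ (s j + s k)/2 := by rw [hsw] at hcv'; exact_mod_cast hcv'
    have hmw : m ≤ sw + lam/2 * ‖y - w‖ ^ 2 := by
      have := hm_le w
      rw [hsw, ← EReal.coe_add] at this
      exact_mod_cast this
    have hpar := parallelogram_mid y (z j) (z k)
    rw [← hw] at hpar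
    have h1 := hslt j
    have h2 := hslt k
    rw [hpar] at hmw
    have hkey : lam * ‖z j - z k‖^2 ≤ 4 * (1/((j:ℝ)+1) + 1/((k:ℝ)+1)) := by
      nlinarith [hmw, hsw2, h1, h2]
    rw [div_mul_eq_mul_div, le_div_iff₀ hlam]
    linarith [hkey]
  have hz_cauchy : CauchySeq z := by
    rw [Metric.cauchySeq_iff]
    intro ε hε
    obtain ⟨N, hN⟩ := exists_nat_gt ((8/lam)/ε^2)
    refine ⟨N, fun j hj k hk => ?_⟩
    have hNpos : (0:ℝ) < (N:ℝ) + 1 := by positivity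
    have h8 : (0:ℝ) ≤ 8/lam := by positivity
    have hjN : 1/((j:ℝ)+1) ≤ 1/((N:ℝ)+1) := by
      apply one_div_le_one_div_of_le hNpos
      have : (N:ℝ) ≤ (j:ℝ) := by exact_mod_cast hj
      linarith
    have hkN : 1/((k:ℝ)+1) ≤ 1/((N:ℝ)+1) := by
      apply one_div_le_one_div_of_le hNpos
      have : (N:ℝ) ≤ (k:ℝ) := by exact_mod_cast hk
      linarith
    have hlt2 : ‖z j - z k‖^2 < ε^2 := by
      have hc := hcau j k
      have h4 : (0:ℝ) ≤ 4/lam := by positivity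
      have hbound : (4/lam) * (1/((j:ℝ)+1) + 1/((k:ℝ)+1)) ≤ (8/lam) * (1/((N:ℝ)+1)) := by
        have e1 := mul_le_mul_of_nonneg_left hjN h4
        have e2 := mul_le_mul_of_nonneg_left hkN h4
        have e3 : (8:ℝ)/lam = 2*(4/lam) := by ring
        rw [e3]
        linarith [e1, e2]
      have hε2 : (0:ℝ) < ε^2 := by positivity
      have h8d : 8/lam < (N:ℝ) * ε^2 := by rwa [div_lt_iff₀ hε2] at hN
      have hN2 : (8/lam) * (1/((N:ℝ)+1)) < ε^2 := by
        rw [mul_one_div, div_lt_iff₀ hNpos]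
        nlinarith
      linarith
    rw [dist_eq_norm]
    exact lt_of_pow_lt_pow_left₀ 2 (le_of_lt hε) hlt2
  obtain ⟨p, hp⟩ := cauchySeq_tendsto_of_complete hz_cauchy
  refine ⟨p, fun z' => ?_⟩
  have hfinal : g p + ((lam/2 * ‖y - p‖ ^ 2 : ℝ) : EReal) ≤ (m : EReal) := by
    by_contra hcon
    push_neg at hcon
    set Q : ℝ := lam/2 * ‖y - p‖ ^ 2 with hQ
    clear_value Q
    obtain ⟨b, hb1, hb2⟩ : ∃ b : ℝ, (b:EReal) < g p ∧ m < b + Q := by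
      rcases ecases (g p) (hne p) with hTp | ⟨sp, hsp⟩
      · exact ⟨m - Q + 1, by rw [hTp]; exact EReal.coe_lt_top _, by linarith⟩
      · rw [hsp, ← EReal.coe_add] at hcon
        have hcon' : m < sp + Q := by exact_mod_cast hcon
        refine ⟨sp - (sp + Q - m)/2, ?_, by linarith⟩
        rw [hsp]
        exact_mod_cast (by linarith : sp - (sp + Q - m)/2 < sp)
    set δ : ℝ := (b + Q - m)/2 with hδ
    clear_value δ
    have hδpos : 0 < δ := by rw [hδ]; linarith
    have ev1 : ∀ᶠ k in atTop, (b:EReal) < g (z k) := hp.eventually (hlsc p _ hb1)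
    have hqt : Tendsto (fun k : ℕ => lam/2 * ‖y - z k‖^2) atTop (nhds Q) := by
      rw [hQ]
      have hc : Continuous fun w : H => lam/2 * ‖y - w‖^2 := by continuity
      exact (hc.tendsto p).comp hp
    have ev2 : ∀ᶠ k in atTop, Q - δ < lam/2 * ‖y - z k‖^2 :=
      hqt.eventually (eventually_gt_nhds (by linarith))
    have ev3 : ∀ᶠ k : ℕ in atTop, 1/((k:ℝ)+1) < δ :=
      tendsto_one_div_add_atTop_nhds_zero_nat.eventually (eventually_lt_nhds hδpos)
    obtain ⟨k, h1, h2, h3⟩ := (ev1.and (ev2.and ev3)).exists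
    have hbk : b < s k := by
      rw [hzs k] at h1
      exact_mod_cast h1
    have h4 := hslt k
    linarith only [hbk, h4, h2, h3, hδ, hb2, hδpos]
  exact hfinal.trans (hm_le z')



lemma env_ineq (f : H → EReal) (P : H → H) (hprox : ∀ x, IsProx f x (P x))
    (fr : H → ℝ) (hfr : ∀ x, f (P x) = (fr x : EReal)) (x y : H) :
    fr y + (1:ℝ)/2 * ‖y - P y‖^2 ≤ fr x + (1:ℝ)/2 * ‖y - P x‖^2 := by
  have h1 := hprox y (P x)
  rw [hfr y, hfr x, ← EReal.coe_add, ← EReal.coe_add] at h1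
  exact_mod_cast h1

lemma mono_ineq (f : H → EReal) (hconv : ERealConvexOn f) (P : H → H)
    (hprox : ∀ x, IsProx f x (P x))
    (fr : H → ℝ) (hfr : ∀ x, f (P x) = (fr x : EReal)) (x y : H) :
    ‖P y - P x‖^2 ≤ ⟪y - x, P y - P x⟫_ℝ := by
  have h1 := prox_subgrad f hconv 1 one_pos x (P x) (fr x) (hfr x) (hprox x) (P y)
  rw [hfr y] at h1
  have h1' : fr x + ⟪(1:ℝ) • (x - P x), P y - P x⟫_ℝ ≤ fr y := by exact_mod_cast h1
  have h2 := prox_subgrad f hconv 1 one_pos y (P y) (fr y) (hfr y) (hprox y) (P x)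
  rw [hfr x] at h2
  have h2' : fr y + ⟪(1:ℝ) • (y - P y), P x - P y⟫_ℝ ≤ fr x := by exact_mod_cast h2
  simp only [one_smul] at h1' h2'
  have e1 : ⟪x - P x, P y - P x⟫_ℝ + ⟪y - P y, P x - P y⟫_ℝ ≤ 0 := by linarith
  have e2 : ⟪x - P x, P y - P x⟫_ℝ + ⟪y - P y, P x - P y⟫_ℝ
      = ⟪x - y, P y - P x⟫_ℝ + ‖P y - P x‖^2 := by
    have h3 : x - P x = (x - y) + (P y - P x) + (y - P y) := by abel
    rw [h3, inner_add_left, inner_add_left, real_inner_self_eq_norm_sq,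
        show P x - P y = -(P y - P x) by abel, inner_neg_right]
    ring
  have e3 : ⟪x - y, P y - P x⟫_ℝ = -⟪y - x, P y - P x⟫_ℝ := by
    rw [show x - y = -(y - x) by abel, inner_neg_left]
  linarith [e1, e2, e3]

set_option maxHeartbeats 1000000 in
/-- Extension: if `f` and `g` differ by `c` on the common prox range, then everywhere
`f ≤ g + c`. -/
lemma ext_le (f g : H → EReal) (hf : Gamma0 f) (hg : Gamma0 g)
    (P : H → H) (hPf : ∀ x, IsProx f x (P x)) (hPg : ∀ x, IsProx g x (P x))
    (c : ℝ) (hc : ∀ x, f (P x) = g (P x) + (c : EReal)) :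
    ∀ y, f y ≤ g y + (c : EReal) := by
  intro y
  obtain ⟨x₀f, hx₀f⟩ := hf.1
  obtain ⟨x₀g, hx₀g⟩ := hg.1
  rcases ecases (g y) (hg.2.1 y) with hT | ⟨t, ht⟩
  · rw [hT, EReal.top_add_coe]
    exact le_top
  · rw [ht, ← EReal.coe_add]
    by_contra hcon
    push_neg at hcon
    obtain ⟨b, hb1, hb2⟩ := EReal.exists_between_coe_real hcon
    -- lower semicontinuity of f at y
    obtain ⟨ε, hε, hball⟩ := Metric.eventually_nhds_iff.mp (hf.2.2.2 y _ hb2)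
    -- affine minorant for g
    set p₀ : H := P 0 with hp₀
    obtain ⟨β, hβ⟩ := prox_val_finite g (hg.2.1) x₀g hx₀g 1 0 p₀ (hPg 0)
    have hminor := prox_subgrad g hg.2.2.1 1 one_pos 0 p₀ β hβ (hPg 0)
    set u₀ : H := (1:ℝ) • (0 - p₀) with hu₀
    set B : ℝ := ‖u₀‖ with hB
    set C₁ : ℝ := max (t - β - ⟪u₀, y - p₀⟫_ℝ) 0 with hC₁
    have hC₁0 : 0 ≤ C₁ := le_max_right _ _
    have hB0 : 0 ≤ B := norm_nonneg _
    obtain ⟨lam, hlam1, hlamB, hlamC⟩ :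
        ∃ lam : ℝ, 1 ≤ lam ∧ 8*(B+1)/ε ≤ lam ∧ 8*(C₁+1)/ε^2 ≤ lam :=
      ⟨max 1 (max (8*(B+1)/ε) (8*(C₁+1)/ε^2)), le_max_left _ _,
        le_trans (le_max_left _ _) (le_max_right _ _),
        le_trans (le_max_right _ _) (le_max_right _ _)⟩
    have hlam : 0 < lam := lt_of_lt_of_le one_pos hlam1
    obtain ⟨p, hp⟩ := exists_weighted_prox g hg.2.1 hg.2.2.1 hg.2.2.2 p₀ u₀ β hminor
      lam hlam y t ht
    obtain ⟨sp, hsp⟩ := prox_val_finite g (hg.2.1) x₀g hx₀g lam y p hp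
    set r : ℝ := ‖y - p‖ with hr
    have hr0 : 0 ≤ r := norm_nonneg _
    -- (a) objective bound
    have ha : sp + lam/2 * r^2 ≤ t := by
      have h1 := hp y
      rw [hsp, ht, sub_self, norm_zero, ← EReal.coe_add, ← EReal.coe_add] at h1
      have h2 : sp + lam/2 * r^2 ≤ t + lam/2 * 0^2 := by exact_mod_cast h1
      norm_num at h2
      linarith [h2]
    -- (b) minorant bound
    have hbm : β + ⟪u₀, y - p₀⟫_ℝ - B * r ≤ sp := by
      have := hminor p
      rw [hsp] at this
      have h1 : β + ⟪u₀, p - p₀⟫_ℝ ≤ sp := by exact_mod_cast this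
      have hsplit : ⟪u₀, p - p₀⟫_ℝ = ⟪u₀, y - p₀⟫_ℝ + ⟪u₀, p - y⟫_ℝ := by
        rw [← inner_add_right]
        congr 1
        abel
      have habs : |⟪u₀, p - y⟫_ℝ| ≤ B * ‖p - y‖ := abs_real_inner_le_norm _ _
      have hnrev : ‖p - y‖ = r := by rw [hr, norm_sub_rev]
      rw [hnrev] at habs
      have := neg_le_of_abs_le habs
      linarith [hsplit ▸ h1]
    have hquad : lam/2 * r^2 ≤ C₁ + B * r := by
      have : t - β - ⟪u₀, y - p₀⟫_ℝ ≤ C₁ := le_max_left _ _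
      linarith
    -- r is small
    have hrsmall : r < ε := by
      set a : ℝ := 2*C₁/lam with haa
      set b' : ℝ := 2*B/lam with hbb
      have ha0 : 0 ≤ a := by positivity
      have hb'0 : 0 ≤ b' := by positivity
      have hsq : Real.sqrt a ^ 2 = a := Real.sq_sqrt ha0
      have hsq0 : 0 ≤ Real.sqrt a := Real.sqrt_nonneg a
      have hr_le : r ≤ b' + Real.sqrt a := by
        by_contra hrc
        push_neg at hrc
        have h1 : r^2 ≤ a + b' * r := by
          have h2 : lam * (r^2) ≤ lam * (a + b' * r) := by
            have e1 : lam * a = 2*C₁ := by rw [haa]; field_simp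
            have e2 : lam * b' = 2*B := by rw [hbb]; field_simp
            calc lam * (r^2) ≤ 2*(C₁ + B*r) := by nlinarith [hquad]
              _ = lam * a + lam * b' * r := by rw [e1, e2]; ring
              _ = lam * (a + b' * r) := by ring
          exact le_of_mul_le_mul_left h2 hlam
        have hrpos : 0 < r := lt_of_le_of_lt (by positivity) hrc
        have hsar : Real.sqrt a < r := lt_of_le_of_lt (by linarith) hrc
        have k1 : (b' + Real.sqrt a) * r < r * r := mul_lt_mul_of_pos_right hrc hrpos
        have k2 : Real.sqrt a * Real.sqrt a ≤ Real.sqrt a * r :=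
          mul_le_mul_of_nonneg_left (le_of_lt hsar) hsq0
        nlinarith [h1, k1, k2, hsq]
      have hb'ε : b' ≤ ε/4 := by
        have h1 : 8*(B+1) ≤ lam * ε := by
          have h2 := mul_le_mul_of_nonneg_right hlamB (le_of_lt hε)
          rwa [div_mul_cancel₀ _ (ne_of_gt hε)] at h2
        rw [hbb, div_le_div_iff₀ hlam (by norm_num : (0:ℝ) < 4)]
        nlinarith [h1, hB0]
      have haε : Real.sqrt a ≤ ε/2 := by
        have hε2 : (0:ℝ) < ε^2 := by positivity
        have h1 : 8*(C₁+1) ≤ lam * ε^2 := by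
          have h2 := mul_le_mul_of_nonneg_right hlamC (le_of_lt hε2)
          rwa [div_mul_cancel₀ _ (ne_of_gt hε2)] at h2
        have h2 : a ≤ (ε/2)^2 := by
          rw [haa, div_le_iff₀ hlam]
          nlinarith [h1, hC₁0]
        calc Real.sqrt a ≤ Real.sqrt ((ε/2)^2) := Real.sqrt_le_sqrt h2
          _ = ε/2 := Real.sqrt_sq (by linarith)
      linarith
    -- p is in the common prox range
    have hsub := prox_subgrad g hg.2.2.1 lam hlam y p sp hsp hp
    have hIsP : IsProx g (p + lam • (y - p)) p := subgrad_prox g p (lam • (y - p)) sp hsp hsub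
    have hPp : p = P (p + lam • (y - p)) :=
      prox_unique g hg.2.2.1 hg.2.1 x₀g hx₀g _ _ _ hIsP (hPg _)
    have hfp : f p = g p + (c : EReal) := by rw [hPp]; exact hc _
    -- contradiction
    have hdist : dist p y < ε := by
      rw [dist_eq_norm, ← norm_sub_rev y p]
      exact hrsmall
    have hbfp : (b : EReal) < f p := hball hdist
    rw [hfp, hsp, ← EReal.coe_add] at hbfp
    have hbfp' : b < sp + c := by exact_mod_cast hbfp
    have hb1' : t + c < b := by exact_mod_cast hb1
    nlinarith [ha, hr0, hlam, sq_nonneg r]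

set_option maxHeartbeats 1000000 in
/-- **Moreau's determination theorem.** If two functions in `Γ₀(H)` have the same proximal
operator, then they differ by a constant. -/
theorem prox_eq_imp_eq_add_const
    (f g : H → EReal) (hf : Gamma0 f) (hg : Gamma0 g)
    (proxf proxg : H → H)
    (hproxf : ∀ x, IsProx f x (proxf x)) (hproxg : ∀ x, IsProx g x (proxg x))
    (h : ∀ x, proxf x = proxg x) :
    ∃ c : ℝ, ∀ x, f x = g x + (c : EReal) := by
  classical
  have hPg : ∀ x, IsProx g x (proxf x) := fun x => (h x) ▸ hproxg x
  obtain ⟨x₀f, hx₀f⟩ := hf.1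
  obtain ⟨x₀g, hx₀g⟩ := hg.1
  have hfrex : ∀ x, ∃ r : ℝ, f (proxf x) = (r:EReal) := fun x =>
    prox_val_finite f hf.2.1 x₀f hx₀f 1 x (proxf x) (hproxf x)
  choose fr hfr using hfrex
  have hgrex : ∀ x, ∃ r : ℝ, g (proxf x) = (r:EReal) := fun x =>
    prox_val_finite g hg.2.1 x₀g hx₀g 1 x (proxf x) (hPg x)
  choose gr hgr using hgrex
  have mono2 : ∀ x y, ⟪y - x, proxf y - proxf x⟫_ℝ ≤ ‖y - x‖^2 := by
    intro x y
    have h1 := mono_ineq f hf.2.2.1 proxf hproxf fr hfr x y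
    have h3 := le_of_abs_le (abs_real_inner_le_norm (y - x) (proxf y - proxf x))
    linarith [h1, h3, sq_nonneg (‖y - x‖ - ‖proxf y - proxf x‖)]
  have step : ∀ x y, (fr y - gr y) - (fr x - gr x) ≤ ‖y - x‖^2 := by
    intro x y
    have e1 := env_ineq f proxf hproxf fr hfr x y
    have e2 := env_ineq g proxf hPg gr hgr y x
    have hmono := mono2 x y
    have n1 := norm_sub_sq_real y (proxf x)
    have n2 := norm_sub_sq_real y (proxf y)
    have n3 := norm_sub_sq_real x (proxf x)
    have n4 := norm_sub_sq_real x (proxf y)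
    have ninner : ⟪y - x, proxf y - proxf x⟫_ℝ
        = ⟪y, proxf y⟫_ℝ - ⟪y, proxf x⟫_ℝ - ⟪x, proxf y⟫_ℝ + ⟪x, proxf x⟫_ℝ := by
      rw [inner_sub_left, inner_sub_right, inner_sub_right]
      ring
    linarith [e1, e2, hmono, n1, n2, n3, n4, ninner]
  have const : ∀ x y, fr y - gr y ≤ fr x - gr x := by
    intro x y
    by_contra hcon
    push_neg at hcon
    have hd0 : 0 < (fr y - gr y) - (fr x - gr x) := by linarith
    set d := (fr y - gr y) - (fr x - gr x) with hd
    obtain ⟨n, hn⟩ := exists_nat_gt (‖y - x‖^2 / d)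
    have hnpos : 0 < (n:ℝ) := lt_of_le_of_lt (by positivity) hn
    have hnne : (n:ℝ) ≠ 0 := ne_of_gt hnpos
    set w : ℕ → H := fun i => x + ((i:ℝ)/(n:ℝ)) • (y - x) with hw
    have hchain : ∀ i : ℕ, i ≤ n →
        (fr (w i) - gr (w i)) - (fr x - gr x) ≤ (i:ℝ) * (‖y - x‖^2 / (n:ℝ)^2) := by
      intro i hi
      induction i with
      | zero =>
        have : w 0 = x := by simp [hw]
        rw [this]
        simp
      | succ i ih =>
        have hih := ih (le_trans (Nat.le_succ i) hi)
        have hdiff : w (i+1) - w i = ((1:ℝ)/(n:ℝ)) • (y - x) := by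
          rw [hw]
          simp only
          rw [add_sub_add_left_eq_sub, ← sub_smul]
          congr 1
          push_cast
          field_simp
          ring
        have hstep := step (w i) (w (i+1))
        have hnorm : ‖w (i+1) - w i‖^2 = ‖y - x‖^2 / (n:ℝ)^2 := by
          rw [hdiff, norm_smul, Real.norm_eq_abs, mul_pow, sq_abs]
          field_simp
        rw [hnorm] at hstep
        push_cast
        linarith [hstep, hih]
    have hfin := hchain n le_rfl
    have hwn : w n = y := by
      rw [hw]
      simp only
      rw [div_self hnne, one_smul]
      abel
    rw [hwn] at hfin
    have hlt : ‖y - x‖^2 / d < (n:ℝ) := hn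
    have heq : (n:ℝ) * (‖y - x‖^2 / (n:ℝ)^2) = ‖y - x‖^2 / (n:ℝ) := by
      field_simp
    have hml : (n:ℝ) * (‖y - x‖^2 / (n:ℝ)^2) < d := by
      rw [heq, div_lt_iff₀ hnpos]
      rw [div_lt_iff₀ hd0] at hlt
      linarith [hlt]
    linarith [hfin, hml]
  have hconst : ∀ x, fr x - gr x = fr 0 - gr 0 := fun x =>
    le_antisymm (const 0 x) (const x 0)
  refine ⟨fr 0 - gr 0, fun y => ?_⟩
  have hcx : ∀ x, f (proxf x) = g (proxf x) + ((fr 0 - gr 0 : ℝ) : EReal) := by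
    intro x
    rw [hfr x, hgr x, ← EReal.coe_add]
    norm_cast
    linarith [hconst x]
  have hcx' : ∀ x, g (proxf x) = f (proxf x) + ((-(fr 0 - gr 0) : ℝ) : EReal) := by
    intro x
    rw [hfr x, hgr x, ← EReal.coe_add]
    norm_cast
    linarith [hconst x]
  have h1 := ext_le f g hf hg proxf hproxf hPg _ hcx y
  have h2 := ext_le g f hg hf proxf hPg hproxf _ hcx' y
  rcases ecases (f y) (hf.2.1 y) with hfT | ⟨s, hsy⟩
  · rw [hfT] at h1 ⊢
    exact (top_le_iff.mp h1).symm
  · rcases ecases (g y) (hg.2.1 y) with hgT | ⟨t, hty⟩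
    · exfalso
      rw [hgT, hsy] at h2
      have h3 : ((s + (-(fr 0 - gr 0)) : ℝ) : EReal) = ⊤ :=
        top_le_iff.mp (le_of_le_of_eq h2 (by norm_cast))
      exact (EReal.coe_ne_top _) h3
    · rw [hsy, hty, ← EReal.coe_add] at h1 h2 ⊢
      norm_cast at h1 h2 ⊢
      linarith [h1, h2]
end
end

section
/- Let H be a real Hilbert space and let f, g : H → ℝ be Gâteaux differentiable convex functions that are bounded from below. If ‖∇f(x)‖ ≤ ‖∇g(x)‖ for all x ∈ H, then f(x) − inf f ≤ g(x) − inf g for all x ∈ H. -/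
open scoped InnerProductSpace
noncomputable section

variable {H : Type*} [NormedAddCommGroup H] [InnerProductSpace ℝ H] [CompleteSpace H]

/-- `g` is the Gâteaux gradient of `f` at `x`: for every direction `v`, the function
`t ↦ f (x + t • v)` is differentiable at `0` with derivative `⟪g, v⟫`. -/
def HasGateauxGradientAt (f : H → ℝ) (g x : H) : Prop :=
  ∀ v : H, HasDerivAt (fun t : ℝ => f (x + t • v)) (⟪g, v⟫_ℝ) 0

set_option linter.unusedSectionVars false
set_option maxHeartbeats 1000000

/-- Subgradient inequality. -/
lemma subgrad {f : H → ℝ} {f' : H → H} (hconv : ConvexOn ℝ Set.univ f)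
    (hf : ∀ x, HasGateauxGradientAt f (f' x) x) (x y : H) :
    f x + ⟪f' x, y - x⟫_ℝ ≤ f y := by
  set φ : ℝ → ℝ := fun t => f (x + t • (y - x)) with hφ
  have hconvφ : ConvexOn ℝ Set.univ φ := by
    have := hconv.comp_affineMap (AffineMap.lineMap x y)
    have heq : φ = f ∘ (AffineMap.lineMap x y) := by
      funext t
      simp [φ, AffineMap.lineMap_apply, add_comm]
    rw [heq]
    simpa using this
  have hd : HasDerivAt φ (⟪f' x, y - x⟫_ℝ) 0 := hf x (y - x)
  -- derivative at 0 ≤ slope from 0 to 1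
  have hslope : Filter.Tendsto (fun t : ℝ => (φ t - φ 0) / t) (nhdsWithin 0 (Set.Ioi 0))
      (nhds (⟪f' x, y - x⟫_ℝ)) := by
    have := hasDerivAt_iff_tendsto_slope.mp hd
    have h2 : nhdsWithin (0:ℝ) (Set.Ioi 0) ≤ nhdsWithin 0 {(0:ℝ)}ᶜ :=
      nhdsWithin_mono _ (by intro t ht; simpa using (ne_of_gt ht))
    have := this.mono_left h2
    refine this.congr ?_
    intro t; simp [slope_def_field, div_eq_inv_mul]
  have hbound : ∀ t ∈ Set.Ioc (0:ℝ) 1, (φ t - φ 0) / t ≤ φ 1 - φ 0 := by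
    intro t ht
    have := hconvφ.secant_mono (a := 0) (x := t) (y := 1) trivial trivial trivial
      (ne_of_gt ht.1) one_ne_zero ht.2
    simpa using this
  have : ⟪f' x, y - x⟫_ℝ ≤ φ 1 - φ 0 := by
    refine le_of_tendsto hslope ?_
    filter_upwards [Ioc_mem_nhdsGT_of_mem (Set.left_mem_Ico.mpr one_pos)] with t ht
    exact hbound t ht
  have h0 : φ 0 = f x := by simp [φ]
  have h1 : φ 1 = f y := by simp [φ]
  rw [h0, h1] at this
  linarith

/-- Existence of the proximal point. -/
lemma prox_exists {g : H → ℝ} {g' : H → H} (hconv : ConvexOn ℝ Set.univ g)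
    (hg : ∀ x, HasGateauxGradientAt g (g' x) x) (hgb : BddBelow (Set.range g))
    (x : H) {lam : ℝ} (hlam : 0 < lam) :
    ∃ p : H, x - p = lam • g' p := by
  obtain ⟨B, hB⟩ := hgb
  have hB' : ∀ y, B ≤ g y := fun y => hB (Set.mem_range_self y)
  set h : H → ℝ := fun y => g y + ‖y - x‖ ^ 2 / (2 * lam) with hh
  have hhb : ∀ y, B ≤ h y := by
    intro y
    have h1 : 0 ≤ ‖y - x‖ ^ 2 / (2 * lam) := by positivity
    have h2 := hB' y
    simp only [hh]; linarith
  have hbdd : BddBelow (Set.range h) := ⟨B, by rintro _ ⟨y, rfl⟩; exact hhb y⟩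
  set m : ℝ := ⨅ y, h y with hm
  have hm_le : ∀ y, m ≤ h y := fun y => ciInf_le hbdd y
  have hseq : ∀ n : ℕ, ∃ y : H, h y < m + 1 / (n + 1) := by
    intro n
    have hlt : m < m + 1 / (n + 1) := by
      have : (0:ℝ) < 1 / (n + 1) := by positivity
      linarith
    exact exists_lt_of_ciInf_lt (α := ℝ) (f := h) hlt
  choose y hy using hseq
  -- strong-convexity midpoint inequality
  have hmid : ∀ u v : H, h ((1/2 : ℝ) • u + (1/2 : ℝ) • v) + ‖u - v‖ ^ 2 / (8 * lam)
      ≤ (h u + h v) / 2 := by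
    intro u v
    have hg2 : g ((1/2 : ℝ) • u + (1/2 : ℝ) • v) ≤ (1/2) * g u + (1/2) * g v :=
      hconv.2 trivial trivial (by norm_num) (by norm_num) (by norm_num)
    set a := u - x with ha
    set b := v - x with hb2
    have hab : (1/2 : ℝ) • u + (1/2 : ℝ) • v - x = (1/2 : ℝ) • (a + b) := by
      simp only [ha, hb2, smul_add, smul_sub]
      module
    have hparallel : ‖a + b‖ ^ 2 + ‖a - b‖ ^ 2 = 2 * ‖a‖ ^ 2 + 2 * ‖b‖ ^ 2 := by
      have h1 := norm_add_sq_real a b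
      have h2 := norm_sub_sq_real a b
      linarith
    have hquad : ‖(1/2 : ℝ) • (a + b)‖ ^ 2 = (1/4) * ‖a + b‖ ^ 2 := by
      rw [norm_smul]
      simp
      ring
    have habuv : u - v = a - b := by simp only [ha, hb2]; abel
    simp only [hh, hab]
    rw [hquad, habuv]
    have hkey : (1/4) * ‖a + b‖ ^ 2 / (2 * lam) + ‖a - b‖ ^ 2 / (8 * lam)
        = (‖a‖ ^ 2 / (2 * lam) + ‖b‖ ^ 2 / (2 * lam)) / 2 := by
      have hl : lam ≠ 0 := ne_of_gt hlam
      field_simp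
      linear_combination 16 * hparallel
    linarith [hg2, hkey]
  -- Cauchy sequence
  have hcauchy : CauchySeq y := by
    rw [Metric.cauchySeq_iff]
    intro ε hε
    have hε2 : (0:ℝ) < ε ^ 2 := by positivity
    obtain ⟨N, hN⟩ := exists_nat_gt (8 * lam / ε ^ 2)
    refine ⟨N, fun n hn k hk => ?_⟩
    have hkey : ‖y n - y k‖ ^ 2 / (8 * lam) ≤ 1 / (n+1) / 2 + 1 / (k+1) / 2 := by
      have h1 := hmid (y n) (y k)
      have h2 := hm_le ((1/2 : ℝ) • y n + (1/2 : ℝ) • y k)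
      have h3 := hy n
      have h4 := hy k
      linarith
    have hb1 : (1:ℝ) / (n+1) ≤ 1 / (N+1) := by
      apply one_div_le_one_div_of_le (by positivity)
      exact_mod_cast Nat.succ_le_succ hn
    have hb2 : (1:ℝ) / (k+1) ≤ 1 / (N+1) := by
      apply one_div_le_one_div_of_le (by positivity)
      exact_mod_cast Nat.succ_le_succ hk
    have h8 : (0:ℝ) < 8 * lam := by linarith
    have hsq : ‖y n - y k‖ ^ 2 ≤ 8 * lam / (N + 1) := by
      rw [div_le_iff₀ h8] at hkey
      calc ‖y n - y k‖ ^ 2 ≤ (1 / (n+1) / 2 + 1 / (k+1) / 2) * (8 * lam) := hkey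
        _ ≤ (1 / (N+1)) * (8 * lam) := by nlinarith
        _ = 8 * lam / (N + 1) := by ring
    have hNe : 8 * lam / (N+1 : ℝ) < ε ^ 2 := by
      rw [div_lt_iff₀ (by positivity)]
      have h2 := mul_lt_mul_of_pos_right hN hε2
      rw [div_mul_cancel₀ _ (ne_of_gt hε2)] at h2
      nlinarith
    rw [dist_eq_norm]
    nlinarith [norm_nonneg (y n - y k), hε]
  obtain ⟨p, hp⟩ := cauchySeq_tendsto_of_complete hcauchy
  -- p is a minimizer
  have hpmin : ∀ z, h p ≤ h z := by
    intro z
    have hkey : ∀ n, h p ≤ m + 1/(n+1) + ⟪g' p, p - y n⟫_ℝ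
        + (‖p - x‖ ^ 2 - ‖y n - x‖ ^ 2) / (2 * lam) := by
      intro n
      have hs := subgrad hconv hg p (y n)
      have hyn := (hy n).le
      simp only [hh] at hyn ⊢
      have hrw : ⟪g' p, y n - p⟫_ℝ = - ⟪g' p, p - y n⟫_ℝ := by
        rw [← inner_neg_right]; congr 1; abel
      rw [hrw] at hs
      have hsplit : (‖p - x‖ ^ 2 - ‖y n - x‖ ^ 2) / (2 * lam)
          = ‖p - x‖ ^ 2 / (2 * lam) - ‖y n - x‖ ^ 2 / (2 * lam) := by ring
      rw [hsplit]
      linarith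
    have htend : Filter.Tendsto (fun n : ℕ => m + 1/(n+1) + ⟪g' p, p - y n⟫_ℝ
        + (‖p - x‖ ^ 2 - ‖y n - x‖ ^ 2) / (2 * lam)) Filter.atTop (nhds m) := by
      have t1 : Filter.Tendsto (fun n : ℕ => (1:ℝ)/(n+1)) Filter.atTop (nhds 0) :=
        tendsto_one_div_add_atTop_nhds_zero_nat
      have c1 : Continuous fun z : H => ⟪g' p, p - z⟫_ℝ :=
        continuous_const.inner (continuous_const.sub continuous_id)
      have t2 : Filter.Tendsto (fun n : ℕ => ⟪g' p, p - y n⟫_ℝ) Filter.atTop (nhds 0) := by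
        have := (c1.tendsto p).comp hp
        simpa [Function.comp_def] using this
      have c2 : Continuous fun z : H => (‖p - x‖ ^ 2 - ‖z - x‖ ^ 2) / (2*lam) :=
        (continuous_const.sub (((continuous_id.sub continuous_const)).norm.pow 2)).div_const _
      have t3 : Filter.Tendsto (fun n : ℕ => (‖p - x‖ ^ 2 - ‖y n - x‖ ^ 2) / (2*lam))
          Filter.atTop (nhds 0) := by
        have := (c2.tendsto p).comp hp
        simpa [Function.comp_def] using this
      have := ((t1.const_add m).add t2).add t3
      simpa using this
    have hle : h p ≤ m := ge_of_tendsto htend (Filter.Eventually.of_forall hkey)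
    exact hle.trans (hm_le z)
  -- optimality condition
  have hopt : ∀ v : H, ⟪g' p, v⟫_ℝ + ⟪p - x, v⟫_ℝ / lam = 0 := by
    intro v
    have hd1 : HasDerivAt (fun t : ℝ => g (p + t • v)) (⟪g' p, v⟫_ℝ) 0 := hg p v
    have hd2 : HasDerivAt (fun t : ℝ => ‖p + t • v - x‖ ^ 2 / (2 * lam))
        (⟪p - x, v⟫_ℝ / lam) 0 := by
      have heq : (fun t : ℝ => ‖p + t • v - x‖ ^ 2 / (2 * lam))
          = fun t : ℝ => (‖p - x‖ ^ 2 + 2 * t * ⟪p - x, v⟫_ℝ + t ^ 2 * ‖v‖ ^ 2) / (2 * lam) := by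
        funext t
        have hab : p + t • v - x = (p - x) + t • v := by abel
        rw [hab, norm_add_sq_real, real_inner_smul_right, norm_smul]
        simp only [Real.norm_eq_abs, mul_pow, sq_abs]
        ring
      rw [heq]
      have hpoly : HasDerivAt (fun t : ℝ => ‖p - x‖ ^ 2 + 2 * t * ⟪p - x, v⟫_ℝ + t ^ 2 * ‖v‖ ^ 2)
          (2 * ⟪p - x, v⟫_ℝ) 0 := by
        have h1 : HasDerivAt (fun t : ℝ => 2 * t * ⟪p - x, v⟫_ℝ) (2 * ⟪p - x, v⟫_ℝ) 0 := by
          simpa [mul_comm, mul_assoc] using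
            ((hasDerivAt_id (0:ℝ)).const_mul 2).mul_const (⟪p - x, v⟫_ℝ)
        have h2 : HasDerivAt (fun t : ℝ => t ^ 2 * ‖v‖ ^ 2) 0 0 := by
          simpa using (hasDerivAt_pow 2 (0:ℝ)).mul_const (‖v‖ ^ 2)
        have h3 := (h1.const_add (‖p - x‖ ^ 2)).add h2
        simp only [add_zero] at h3
        exact h3
      have hdiv := hpoly.div_const (2 * lam)
      convert hdiv using 1
      · rfl
      · rfl
      ring
    have hd : HasDerivAt (fun t : ℝ => h (p + t • v)) (⟪g' p, v⟫_ℝ + ⟪p - x, v⟫_ℝ / lam) 0 := by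
      simp only [hh]
      exact hd1.add hd2
    have hloc : IsLocalMin (fun t : ℝ => h (p + t • v)) 0 := by
      apply Filter.Eventually.of_forall
      intro t
      have := hpmin (p + t • v)
      simpa using this
    exact hloc.hasDerivAt_eq_zero hd
  refine ⟨p, ?_⟩
  have hw : g' p + lam⁻¹ • (p - x) = 0 := by
    set w := g' p + lam⁻¹ • (p - x) with hwdef
    have hz : ⟪w, w⟫_ℝ = 0 := by
      have ho := hopt w
      rw [hwdef, inner_add_left, real_inner_smul_left]
      rw [div_eq_inv_mul] at ho
      linarith
    rwa [inner_self_eq_zero] at hz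
  have hgp : g' p = lam⁻¹ • (x - p) := by
    have h1 : g' p = - (lam⁻¹ • (p - x)) := by
      rw [← add_eq_zero_iff_eq_neg]; exact hw
    rw [h1, ← smul_neg]
    congr 1
    abel
  rw [hgp, smul_smul, mul_inv_cancel₀ (ne_of_gt hlam), one_smul]

lemma key (f g : H → ℝ) (f' g' : H → H)
    (hfconv : ConvexOn ℝ Set.univ f) (hgconv : ConvexOn ℝ Set.univ g)
    (hf' : ∀ x, HasGateauxGradientAt f (f' x) x)
    (hg' : ∀ x, HasGateauxGradientAt g (g' x) x)
    (hgb : BddBelow (Set.range g))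
    (h : ∀ x, ‖f' x‖ ≤ ‖g' x‖)
    (x₀ : H) {lam : ℝ} (hlam : 0 < lam) (N : ℕ) :
    ∃ q : H,
      f x₀ - f q ≤ (g x₀ - g q) + lam * ‖g' x₀‖^2 ∧
      ‖q - x₀‖^2 ≤ (N : ℝ) * lam * (g x₀ - g q) ∧
      (N : ℝ) * lam * ‖g' q‖^2 ≤ g x₀ - g q ∧
      (∀ z, 2 * lam * (N : ℝ) * (g q - g z) ≤ ‖x₀ - z‖^2) := by
  classical
  -- the proximal map
  have hPex : ∀ w : H, ∃ p : H, w - p = lam • g' p :=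
    fun w => prox_exists hgconv hg' hgb w hlam
  set P : H → H := fun w => Classical.choose (hPex w) with hPdef
  have hP : ∀ w, w - P w = lam • g' (P w) := fun w => Classical.choose_spec (hPex w)
  set u : ℕ → H := fun n => P^[n] x₀ with hu
  have hu0 : u 0 = x₀ := rfl
  have husucc : ∀ n, u (n+1) = P (u n) := by
    intro n
    simp only [hu, Function.iterate_succ_apply']
  have hrel : ∀ n, u n - u (n+1) = lam • g' (u (n+1)) := by
    intro n; rw [husucc]; exact hP (u n)
  -- per-step facts
  have step_g : ∀ n, g (u n) - g (u (n+1)) ≥ lam * ‖g' (u (n+1))‖^2 := by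
    intro n
    have hs := subgrad hgconv hg' (u (n+1)) (u n)
    have : ⟪g' (u (n+1)), u n - u (n+1)⟫_ℝ = lam * ‖g' (u (n+1))‖^2 := by
      rw [hrel n, real_inner_smul_right, real_inner_self_eq_norm_sq]
    linarith [hs, this.ge, this.le]
  have step_f : ∀ n, f (u n) - f (u (n+1)) ≤ lam * ‖g' (u n)‖ * ‖g' (u (n+1))‖ := by
    intro n
    have hs := subgrad hfconv hf' (u n) (u (n+1))
    have h1 : ⟪f' (u n), u (n+1) - u n⟫_ℝ = - ⟪f' (u n), u n - u (n+1)⟫_ℝ := by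
      rw [← inner_neg_right]; congr 1; abel
    rw [h1] at hs
    have h2 : ⟪f' (u n), u n - u (n+1)⟫_ℝ = lam * ⟪f' (u n), g' (u (n+1))⟫_ℝ := by
      rw [hrel n, real_inner_smul_right]
    have h3 : ⟪f' (u n), g' (u (n+1))⟫_ℝ ≤ ‖f' (u n)‖ * ‖g' (u (n+1))‖ :=
      real_inner_le_norm _ _
    have h4 : ‖f' (u n)‖ * ‖g' (u (n+1))‖ ≤ ‖g' (u n)‖ * ‖g' (u (n+1))‖ :=
      mul_le_mul_of_nonneg_right (h (u n)) (norm_nonneg _)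
    nlinarith [hs, h2, h3, h4, hlam]
  have step_grad : ∀ n, ‖g' (u (n+1))‖ ≤ ‖g' (u n)‖ := by
    intro n
    have hs1 := subgrad hgconv hg' (u n) (u (n+1))
    have hs2 := subgrad hgconv hg' (u (n+1)) (u n)
    -- monotonicity: ⟪g' (u n) - g' (u (n+1)), u n - u (n+1)⟫ ≥ 0
    have hmono : 0 ≤ ⟪g' (u n) - g' (u (n+1)), u n - u (n+1)⟫_ℝ := by
      rw [inner_sub_left]
      have e1 : ⟪g' (u n), u (n+1) - u n⟫_ℝ = - ⟪g' (u n), u n - u (n+1)⟫_ℝ := by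
        rw [← inner_neg_right]; congr 1; abel
      rw [e1] at hs1
      linarith
    rw [hrel n, inner_sub_left, real_inner_smul_right, real_inner_smul_right,
      real_inner_self_eq_norm_sq] at hmono
    have hcs : ⟪g' (u n), g' (u (n+1))⟫_ℝ ≤ ‖g' (u n)‖ * ‖g' (u (n+1))‖ :=
      real_inner_le_norm _ _
    have hin : ‖g' (u (n+1))‖^2 ≤ ⟪g' (u n), g' (u (n+1))⟫_ℝ :=
      (mul_le_mul_iff_right₀ hlam).mp (by linarith)
    nlinarith [norm_nonneg (g' (u (n+1))), norm_nonneg (g' (u n))]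
  have grad_anti : Antitone fun n => ‖g' (u n)‖ := antitone_nat_of_succ_le step_grad
  have g_anti : Antitone fun n => g (u n) := by
    apply antitone_nat_of_succ_le
    intro n
    have := step_g n
    nlinarith [sq_nonneg ‖g' (u (n+1))‖, hlam]
  -- (a) : telescoping with error control
  have ha : ∀ n : ℕ, f (u 0) - f (u n) ≤ (g (u 0) - g (u n))
      + lam * ‖g' (u 0)‖ * (‖g' (u 0)‖ - ‖g' (u n)‖) := by
    intro n
    induction n with
    | zero => simp
    | succ n ih =>
      have h1 := step_f n
      have h2 := step_g n
      have h3 : ‖g' (u (n+1))‖ ≤ ‖g' (u 0)‖ := grad_anti (Nat.zero_le _)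
      have h4 := step_grad n
      have h5 : (0:ℝ) ≤ ‖g' (u (n+1))‖ := norm_nonneg _
      have h6 : ‖g' (u n)‖ ≤ ‖g' (u 0)‖ := grad_anti (Nat.zero_le _)
      have hprod : 0 ≤ lam * ((‖g' (u n)‖ - ‖g' (u (n+1))‖) * (‖g' (u 0)‖ - ‖g' (u (n+1))‖)) :=
        mul_nonneg hlam.le (mul_nonneg (by linarith) (by linarith))
      nlinarith [hprod]
  -- partial sums
  set s1 : ℕ → ℝ := fun n => ∑ k ∈ Finset.range n, ‖g' (u (k+1))‖ with hs1def
  set s2 : ℕ → ℝ := fun n => ∑ k ∈ Finset.range n, ‖g' (u (k+1))‖^2 with hs2def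
  have hb1 : ∀ n, ‖u n - u 0‖ ≤ lam * s1 n := by
    intro n
    induction n with
    | zero => simp [s1]
    | succ n ih =>
      have hstep : ‖u (n+1) - u n‖ = lam * ‖g' (u (n+1))‖ := by
        have : u (n+1) - u n = -(lam • g' (u (n+1))) := by rw [← hrel n]; abel
        rw [this, norm_neg, norm_smul, Real.norm_eq_abs, abs_of_pos hlam]
      have htri : ‖u (n+1) - u 0‖ ≤ ‖u (n+1) - u n‖ + ‖u n - u 0‖ := by
        have := norm_add_le (u (n+1) - u n) (u n - u 0)
        simpa [sub_add_sub_cancel] using this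
      have hsum : s1 (n+1) = s1 n + ‖g' (u (n+1))‖ := by
        simp [hs1def, Finset.sum_range_succ]
      rw [hsum]
      rw [hstep] at htri
      linarith [htri, ih]
  have hb2 : ∀ n, lam * s2 n ≤ g (u 0) - g (u n) := by
    intro n
    induction n with
    | zero => simp [s2]
    | succ n ih =>
      have hsum : s2 (n+1) = s2 n + ‖g' (u (n+1))‖^2 := by
        simp [hs2def, Finset.sum_range_succ]
      have := step_g n
      rw [hsum]
      nlinarith
  have hb3 : ∀ n : ℕ, (s1 n)^2 ≤ (n : ℝ) * s2 n := by
    intro n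
    have := sq_sum_le_card_mul_sum_sq (s := Finset.range n)
      (f := fun k => ‖g' (u (k+1))‖)
    simpa [hs1def, hs2def, Finset.card_range] using this
  have hc : ∀ n : ℕ, (n : ℝ) * lam * ‖g' (u n)‖^2 ≤ g (u 0) - g (u n) := by
    intro n
    have hlow : ∀ k ∈ Finset.range n, ‖g' (u n)‖^2 ≤ ‖g' (u (k+1))‖^2 := by
      intro k hk
      have hkn : k + 1 ≤ n := Finset.mem_range.mp hk
      have := grad_anti hkn
      have h5 : (0:ℝ) ≤ ‖g' (u n)‖ := norm_nonneg _
      nlinarith [this]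
    have hcard := Finset.card_nsmul_le_sum (Finset.range n) _ _ hlow
    rw [Finset.card_range, nsmul_eq_mul] at hcard
    have : (n:ℝ) * ‖g' (u n)‖^2 ≤ s2 n := hcard
    have h2 := hb2 n
    nlinarith [this, hlam]
  -- Fejér
  have hfejer : ∀ z n, ‖u (n+1) - z‖^2 ≤ ‖u n - z‖^2 - 2*lam*(g (u (n+1)) - g z) := by
    intro z n
    have hexp : u n - z = (u (n+1) - z) + lam • g' (u (n+1)) := by
      rw [← hrel n]; abel
    have hns := norm_add_sq_real (u (n+1) - z) (lam • g' (u (n+1)))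
    rw [← hexp] at hns
    have hinner : ⟪u (n+1) - z, lam • g' (u (n+1))⟫_ℝ
        = lam * ⟪g' (u (n+1)), u (n+1) - z⟫_ℝ := by
      rw [real_inner_smul_right, real_inner_comm]
    have hsub := subgrad hgconv hg' (u (n+1)) z
    have hge : ⟪g' (u (n+1)), u (n+1) - z⟫_ℝ ≥ g (u (n+1)) - g z := by
      have e1 : ⟪g' (u (n+1)), z - u (n+1)⟫_ℝ = - ⟪g' (u (n+1)), u (n+1) - z⟫_ℝ := by
        rw [← inner_neg_right]; congr 1; abel
      rw [e1] at hsub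
      linarith
    have hnn : (0:ℝ) ≤ ‖lam • g' (u (n+1))‖^2 := sq_nonneg _
    nlinarith [hns, hinner, hge, hnn, hlam]
  have hd : ∀ z n, 2 * lam * (∑ k ∈ Finset.range n, (g (u (k+1)) - g z)) + ‖u n - z‖^2
      ≤ ‖u 0 - z‖^2 := by
    intro z n
    induction n with
    | zero => simp
    | succ n ih =>
      rw [Finset.sum_range_succ]
      have := hfejer z n
      nlinarith
  have hdfin : ∀ (z : H) (n : ℕ), 2 * lam * (n:ℝ) * (g (u n) - g z) ≤ ‖u 0 - z‖^2 := by
    intro z n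
    have hlow : ∀ k ∈ Finset.range n, g (u n) - g z ≤ g (u (k+1)) - g z := by
      intro k hk
      have hkn : k + 1 ≤ n := Finset.mem_range.mp hk
      have := g_anti hkn
      linarith [this]
    have hcard := Finset.card_nsmul_le_sum (Finset.range n) _ _ hlow
    rw [Finset.card_range, nsmul_eq_mul] at hcard
    have h1 := hd z n
    have h2 : (0:ℝ) ≤ ‖u n - z‖^2 := sq_nonneg _
    nlinarith [hcard, hlam]
  -- assemble
  refine ⟨u N, ?_, ?_, ?_, ?_⟩
  · have hN := ha N
    rw [hu0] at hN
    have h3 : ‖g' (u N)‖ ≥ 0 := norm_nonneg _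
    have h4 : ‖g' x₀‖ ≥ 0 := norm_nonneg _
    have h7 : 0 ≤ lam * (‖g' x₀‖ * ‖g' (u N)‖) := mul_nonneg hlam.le (mul_nonneg h4 h3)
    nlinarith [hN, h7]
  · have h1 := hb1 N
    have h2 := hb2 N
    have h3 := hb3 N
    have h4 : 0 ≤ s1 N := Finset.sum_nonneg fun k _ => norm_nonneg _
    rw [hu0] at h1 h2
    have h5 : (0:ℝ) ≤ ‖u N - x₀‖ := norm_nonneg _
    have h6 := mul_le_mul_of_nonneg_left h3 (le_of_lt (mul_pos hlam hlam))
    calc ‖u N - x₀‖^2 ≤ (lam * s1 N)^2 := by nlinarith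
      _ = lam * lam * (s1 N)^2 := by ring
      _ ≤ lam * lam * ((N:ℝ) * s2 N) := h6
      _ = (N:ℝ) * lam * (lam * s2 N) := by ring
      _ ≤ (N:ℝ) * lam * (g x₀ - g (u N)) := by
        apply mul_le_mul_of_nonneg_left h2
        positivity
  · have := hc N
    rw [hu0] at this
    exact this
  · intro z
    have hzN := hdfin z N
    rw [hu0] at hzN
    exact hzN

/-- Comparison principle for convex functions through the norms of their gradients. -/
theorem comparison_of_gradient_norm_le
    (f g : H → ℝ) (f' g' : H → H)
    (hfconv : ConvexOn ℝ Set.univ f) (hgconv : ConvexOn ℝ Set.univ g)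
    (hf' : ∀ x, HasGateauxGradientAt f (f' x) x)
    (hg' : ∀ x, HasGateauxGradientAt g (g' x) x)
    (hfb : BddBelow (Set.range f)) (hgb : BddBelow (Set.range g))
    (h : ∀ x, ‖f' x‖ ≤ ‖g' x‖) :
    ∀ x, f x - (⨅ y, f y) ≤ g x - (⨅ y, g y) := by
  set If : ℝ := ⨅ y, f y with hIf
  set Ig : ℝ := ⨅ y, g y with hIg
  have hIf_le : ∀ z, If ≤ f z := fun z => ciInf_le hfb z
  have hIg_le : ∀ z, Ig ≤ g z := fun z => ciInf_le hgb z
  have hfz : ∀ δ : ℝ, 0 < δ → ∃ z, f z < If + δ := by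
    intro δ hδ
    exact exists_lt_of_ciInf_lt (α := ℝ) (f := f) (by linarith [le_refl If] : If < If + δ)
  have hgz : ∀ δ : ℝ, 0 < δ → ∃ z, g z < Ig + δ := by
    intro δ hδ
    exact exists_lt_of_ciInf_lt (α := ℝ) (f := g) (by linarith [le_refl Ig] : Ig < Ig + δ)
  have le_eps : ∀ a b : ℝ, (∀ ε : ℝ, 0 < ε → a ≤ b + ε) → a ≤ b := by
    intro a b hab
    by_contra hc
    push_neg at hc
    have := hab ((a - b)/2) (by linarith)
    linarith
  -- Pass 1 : linear bound with constant 2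
  have P1 : ∀ x, f x - If ≤ 2 * (g x - Ig) := by
    intro x
    apply le_eps
    intro ε hε
    obtain ⟨z, hz⟩ := hfz (ε/3) (by linarith)
    have hBpos : (0:ℝ) < ‖g' x‖^2 + 1 := by positivity
    set lam : ℝ := ε / (3 * (‖g' x‖^2 + 1)) with hlamdef
    have hlam : 0 < lam := by positivity
    set G₀ : ℝ := g x - Ig with hG0
    have hG0nn : 0 ≤ G₀ := by have := hIg_le x; simp only [hG0]; linarith
    set A : ℝ := G₀ * ‖x - z‖^2 with hA
    have hAnn : 0 ≤ A := by positivity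
    obtain ⟨n, hn⟩ := exists_nat_ge ((9 * A / ε^2 + 1)/lam)
    obtain ⟨q, hq1, hq2, hq3, hq4⟩ := key f g f' g' hfconv hgconv hf' hg' hgb h x hlam n
    set T : ℝ := (n:ℝ) * lam with hT
    have hT1 : 9 * A / ε^2 + 1 ≤ T := by
      rw [div_le_iff₀ hlam] at hn
      exact hn
    have hTpos : 0 < T := lt_of_lt_of_le (by positivity) hT1
    set D : ℝ := g x - g q with hD
    have hDnn : 0 ≤ D := by nlinarith [hq3, sq_nonneg ‖g' q‖]
    have hDG : D ≤ G₀ := by have := hIg_le q; simp only [hD, hG0]; linarith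
    have hlB : lam * ‖g' x‖^2 ≤ ε/3 := by
      rw [hlamdef, div_mul_eq_mul_div, div_le_iff₀ (by positivity)]
      nlinarith [hε, sq_nonneg ‖g' x‖]
    have hi : f x - f q ≤ D + ε/3 := by
      have := hq1
      simp only [hD]
      linarith
    -- bound f q - If
    have hsub := subgrad hfconv hf' q z
    have habs : |⟪f' q, z - q⟫_ℝ| ≤ ‖f' q‖ * ‖z - q‖ := abs_real_inner_le_norm _ _
    have htri : ‖z - q‖ ≤ ‖x - z‖ + ‖q - x‖ := by
      have := norm_add_le (z - x) (x - q)
      have e : z - x + (x - q) = z - q := by abel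
      rw [e] at this
      calc ‖z - q‖ ≤ ‖z - x‖ + ‖x - q‖ := this
        _ = ‖x - z‖ + ‖q - x‖ := by rw [norm_sub_rev z x, norm_sub_rev x q]
    have hfq : f q ≤ f z + ‖g' q‖ * (‖x - z‖ + ‖q - x‖) := by
      have h1 : f q ≤ f z + ‖f' q‖ * ‖z - q‖ := by
        have := abs_le.mp habs
        linarith [hsub, this.1]
      have h2 : ‖f' q‖ * ‖z - q‖ ≤ ‖g' q‖ * ‖z - q‖ :=
        mul_le_mul_of_nonneg_right (h q) (norm_nonneg _)
      have h3 : ‖g' q‖ * ‖z - q‖ ≤ ‖g' q‖ * (‖x - z‖ + ‖q - x‖) :=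
        mul_le_mul_of_nonneg_left htri (norm_nonneg _)
      linarith
    -- ‖g' q‖ * ‖q - x‖ ≤ D
    have e1 : T * ‖g' q‖^2 ≤ D := hq3
    have e2 : ‖q - x‖^2 ≤ T * D := hq2
    have hqx : ‖g' q‖ * ‖q - x‖ ≤ D := by
      have h0 := mul_le_mul e1 e2 (sq_nonneg _) hDnn
      have h5 : T * (‖g' q‖^2 * ‖q - x‖^2) ≤ T * D^2 := by nlinarith [h0]
      have h6 : ‖g' q‖^2 * ‖q - x‖^2 ≤ D^2 := le_of_mul_le_mul_left h5 hTpos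
      nlinarith [mul_nonneg (norm_nonneg (g' q)) (norm_nonneg (q - x)), hDnn, h6]
    -- ‖g' q‖ * ‖x - z‖ ≤ ε/3
    have e4 : T * ‖g' q‖^2 ≤ G₀ := le_trans e1 hDG
    have e5 : T * ‖g' q‖^2 * ‖x - z‖^2 ≤ A := by
      have := mul_le_mul_of_nonneg_right e4 (sq_nonneg ‖x - z‖)
      simpa [hA] using this
    have e6 : 9 * A ≤ ε^2 * T - ε^2 := by
      have hε2 : (0:ℝ) < ε^2 := by positivity
      rw [div_add' _ _ _ (ne_of_gt hε2), div_le_iff₀ hε2] at hT1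
      nlinarith [hT1]
    have hxz : ‖g' q‖ * ‖x - z‖ ≤ ε/3 := by
      have hab : 0 ≤ ‖g' q‖ * ‖x - z‖ := mul_nonneg (norm_nonneg _) (norm_nonneg _)
      have e8 : (‖g' q‖ * ‖x - z‖)^2 ≤ (ε/3)^2 := by nlinarith [e5, e6, hTpos, hε]
      nlinarith [e8, hab, hε]
    -- assemble pass 1
    have hfqIf : f q - If ≤ ε/3 + D + ε/3 := by
      have := hfq
      linarith [hz, hqx, hxz]
    have : f x - If ≤ 2 * D + ε := by linarith [hi, hfqIf]
    linarith [hDG, this]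
  -- Pass 2 : bootstrap
  intro x
  apply le_eps
  intro ε hε
  obtain ⟨z, hz⟩ := hgz (ε/3) (by linarith)
  have hBpos : (0:ℝ) < ‖g' x‖^2 + 1 := by positivity
  set lam : ℝ := ε / (3 * (‖g' x‖^2 + 1)) with hlamdef
  have hlam : 0 < lam := by positivity
  obtain ⟨n, hn⟩ := exists_nat_ge ((3 * ‖x - z‖^2 / ε + 1)/lam)
  obtain ⟨q, hq1, hq2, hq3, hq4⟩ := key f g f' g' hfconv hgconv hf' hg' hgb h x hlam n
  set T : ℝ := (n:ℝ) * lam with hT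
  have hT1 : 3 * ‖x - z‖^2 / ε + 1 ≤ T := by
    rw [div_le_iff₀ hlam] at hn
    exact hn
  have hTpos : 0 < T := by
    have : (0:ℝ) ≤ 3 * ‖x - z‖^2 / ε := by positivity
    linarith
  have hlB : lam * ‖g' x‖^2 ≤ ε/3 := by
    rw [hlamdef, div_mul_eq_mul_div, div_le_iff₀ (by positivity)]
    nlinarith [hε, sq_nonneg ‖g' x‖]
  have hi : f x - f q ≤ (g x - g q) + ε/3 := by linarith [hq1]
  -- g q - Ig small
  have hgq : g q - g z ≤ ‖x - z‖^2 / (2 * T) := by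
    have := hq4 z
    rw [div_eq_div_iff] at * <;> try positivity
    rw [le_div_iff₀ (by positivity : (0:ℝ) < 2 * T)]
    nlinarith [this]
  have hxzT : ‖x - z‖^2 / (2 * T) ≤ ε/3 := by
    rw [div_le_iff₀ (by positivity : (0:ℝ) < 2 * T)]
    have : 3 * ‖x - z‖^2 ≤ ε * T := by
      have := hT1
      rw [div_add' _ _ _ (ne_of_gt hε), div_le_iff₀ hε] at this
      nlinarith [this]
    nlinarith [this, hε, hTpos]
  have hgqIg : g q - Ig ≤ 2*ε/3 := by linarith [hgq, hxzT, hz]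
  have hP1q := P1 q
  have : f x - If ≤ (g x - g q) + ε/3 + 2 * (g q - Ig) := by linarith [hi, hP1q]
  have hfinal : f x - If ≤ (g x - Ig) + ε/3 + (g q - Ig) := by linarith
  linarith [hfinal, hgqIg]
end
end

section
/- Let H be a real Hilbert space, let f, g ∈ Γ0(H), and let x₀ ∈ dom f ∩ dom g. If ‖prox_f(x) − x₀‖ ≤ ‖prox_g(x) − x₀‖ for all x ∈ H, then g(x) − g(x₀) ≤ f(x) − f(x₀) for all x ∈ H. -/
open scoped InnerProductSpace
noncomputable section

set_option linter.unusedSectionVars false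
set_option linter.unusedVariables false
set_option maxHeartbeats 1000000

variable {H : Type*} [NormedAddCommGroup H] [InnerProductSpace ℝ H] [CompleteSpace H]

namespace ProxComparisonAux

lemma exists_real {x : EReal} (h1 : x ≠ ⊤) (h2 : x ≠ ⊥) : ∃ a : ℝ, x = (a : EReal) :=
  ⟨x.toReal, (EReal.coe_toReal h1 h2).symm⟩

lemma prox_ne_top {f : H → EReal} {x p u : H} (hp : IsProx f x p) (hu : f u ≠ ⊤) :
    f p ≠ ⊤ := by
  intro h
  have h1 := hp u
  rw [h, EReal.top_add_coe] at h1
  have h2 : f u + (((1:ℝ)/2 * ‖x - u‖ ^ 2 : ℝ) : EReal) < ⊤ :=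
    EReal.add_lt_top hu (EReal.coe_ne_top _)
  exact absurd h1 (not_le.mpr h2)

lemma prox_real_ineq {f : H → EReal} {x p u : H} (hp : IsProx f x p) {a b : ℝ}
    (ha : f p = (a : EReal)) (hb : f u = (b : EReal)) :
    a + 1/2 * ‖x - p‖ ^ 2 ≤ b + 1/2 * ‖x - u‖ ^ 2 := by
  have h1 := hp u
  rw [ha, hb, ← EReal.coe_add, ← EReal.coe_add] at h1
  exact_mod_cast h1

/-- Subgradient inequality at the prox point: `x - p ∈ ∂f(p)`. -/
lemma subgrad_at_prox {f : H → EReal} (hconv : ERealConvexOn f)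
    {x p : H} (hp : IsProx f x p) {a : ℝ} (ha : f p = (a : EReal))
    {u : H} {b : ℝ} (hb : f u = (b : EReal)) :
    ⟪x - p, u - p⟫_ℝ ≤ b - a := by
  have key : ∀ t : ℝ, 0 < t → t ≤ 1 →
      ⟪x - p, u - p⟫_ℝ ≤ (b - a) + t / 2 * ‖u - p‖ ^ 2 := by
    intro t ht0 ht1
    have hcomb := hconv p u (1 - t) t (by linarith) ht0.le (by ring)
    rw [ha, hb, ← EReal.coe_mul, ← EReal.coe_mul, ← EReal.coe_add] at hcomb
    have hpt : (1 - t) • p + t • u = p + t • (u - p) := by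
      rw [smul_sub, sub_smul, one_smul]; abel
    rw [hpt] at hcomb
    have hprox := hp (p + t • (u - p))
    rw [ha] at hprox
    have hchain : ((a + 1/2 * ‖x - p‖ ^ 2 : ℝ) : EReal)
        ≤ (((1 - t) * a + t * b + 1/2 * ‖x - (p + t • (u - p))‖ ^ 2 : ℝ) : EReal) := by
      rw [EReal.coe_add, EReal.coe_add]
      exact le_trans hprox (add_le_add hcomb le_rfl)
    have hre : a + 1/2 * ‖x - p‖ ^ 2
        ≤ (1 - t) * a + t * b + 1/2 * ‖x - (p + t • (u - p))‖ ^ 2 := by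
      exact_mod_cast hchain
    have hexp : ‖x - (p + t • (u - p))‖ ^ 2
        = ‖x - p‖ ^ 2 - 2 * (t * ⟪x - p, u - p⟫_ℝ) + t ^ 2 * ‖u - p‖ ^ 2 := by
      have h0 : x - (p + t • (u - p)) = (x - p) - t • (u - p) := by abel
      rw [h0, norm_sub_sq_real, real_inner_smul_right, norm_smul]
      simp [Real.norm_eq_abs, mul_pow, sq_abs]
    rw [hexp] at hre
    have hmul : t * ⟪x - p, u - p⟫_ℝ ≤ t * ((b - a) + t / 2 * ‖u - p‖ ^ 2) := by
      nlinarith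
    exact le_of_mul_le_mul_left hmul ht0
  by_contra hlt
  push_neg at hlt
  set δ : ℝ := ⟪x - p, u - p⟫_ℝ - (b - a) with hδdef
  have hδ0 : 0 < δ := by simp only [hδdef]; linarith
  set Q : ℝ := ‖u - p‖ ^ 2 with hQdef
  have hQ0 : 0 ≤ Q := sq_nonneg _
  set t : ℝ := min 1 (δ / (Q + 1)) with htdef
  have ht0 : 0 < t := lt_min one_pos (div_pos hδ0 (by linarith))
  have ht1 : t ≤ 1 := min_le_left _ _
  have h2 := key t ht0 ht1
  have h3 : t ≤ δ / (Q + 1) := min_le_right _ _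
  have h4 : t * Q ≤ δ / (Q + 1) * Q := mul_le_mul_of_nonneg_right h3 hQ0
  have h5 : δ / (Q + 1) * Q < δ := by
    rw [div_mul_eq_mul_div, div_lt_iff₀ (by linarith)]
    nlinarith
  have h6 : t / 2 * Q < δ := by nlinarith
  simp only [hδdef] at h6
  linarith


/-- The epigraph of `g`. -/
def Epi (g : H → EReal) : Set (H × ℝ) := {p | g p.1 ≤ (p.2 : EReal)}

lemma epi_convex {g : H → EReal} (hconv : ERealConvexOn g) (hbot : ∀ z, g z ≠ ⊥) :
    Convex ℝ (Epi g) := by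
  rintro ⟨z, τ⟩ hz ⟨z', τ'⟩ hz' a b ha hb hab
  simp only [Epi, Set.mem_setOf_eq] at hz hz' ⊢
  have hz_ne : g z ≠ ⊤ := fun h => by simp [h] at hz
  have hz'_ne : g z' ≠ ⊤ := fun h => by simp [h] at hz'
  obtain ⟨c, hc⟩ := exists_real hz_ne (hbot z)
  obtain ⟨c', hc'⟩ := exists_real hz'_ne (hbot z')
  have hcτ : c ≤ τ := by rw [hc] at hz; exact_mod_cast hz
  have hcτ' : c' ≤ τ' := by rw [hc'] at hz'; exact_mod_cast hz'
  have h1 := hconv z z' a b ha hb hab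
  rw [hc, hc', ← EReal.coe_mul, ← EReal.coe_mul, ← EReal.coe_add] at h1
  refine le_trans h1 ?_
  have : a * c + b * c' ≤ a * τ + b * τ' := by
    have := mul_le_mul_of_nonneg_left hcτ ha
    have := mul_le_mul_of_nonneg_left hcτ' hb
    linarith
  calc ((a * c + b * c' : ℝ) : EReal) ≤ ((a * τ + b * τ' : ℝ) : EReal) := by exact_mod_cast this
    _ = (((a • (z, τ) + b • (z', τ') : H × ℝ).2 : ℝ) : EReal) := by
        simp [Prod.smul_def, smul_eq_mul]

lemma epi_closed {g : H → EReal} (hlsc : LowerSemicontinuous g) : IsClosed (Epi g) := by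
  rw [← isOpen_compl_iff, isOpen_iff_mem_nhds]
  rintro ⟨z₀, τ₀⟩ hmem
  simp only [Set.mem_compl_iff, Epi, Set.mem_setOf_eq, not_le] at hmem
  obtain ⟨c, hc1, hc2⟩ := exists_between hmem
  have hc_ne_top : c ≠ ⊤ := hc2.ne_top
  have hc_ne_bot : c ≠ ⊥ := fun h => by
    rw [h] at hc1; exact (not_lt_bot hc1)
  obtain ⟨cr, hcr⟩ := exists_real hc_ne_top hc_ne_bot
  have hτcr : τ₀ < cr := by
    rw [hcr] at hc1; exact_mod_cast hc1
  have hev : ∀ᶠ z in nhds z₀, c < g z := hlsc z₀ c hc2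
  rw [nhds_prod_eq]
  apply Filter.mem_of_superset (Filter.prod_mem_prod hev (Iio_mem_nhds hτcr))
  rintro ⟨z, τ⟩ ⟨h1, h2⟩
  simp only [Set.mem_Iio] at h2
  simp only [Set.mem_compl_iff, Epi, Set.mem_setOf_eq, not_le]
  calc ((τ : ℝ) : EReal) < ((cr : ℝ) : EReal) := by exact_mod_cast h2
    _ = c := hcr.symm
    _ < g z := h1

/-- Separation step: a linear functional strictly separating `(y, μ)` from the epigraph. -/
lemma sep_unpack {g : H → EReal} (hconv : ERealConvexOn g) (hbot : ∀ z, g z ≠ ⊥)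
    (hlsc : LowerSemicontinuous g) {x₁ : H} {c₁ : ℝ} (hx₁ : g x₁ ≤ (c₁ : EReal))
    {y : H} {μ : ℝ} (hμ : (μ : EReal) < g y) :
    ∃ (w : H) (s u : ℝ), s ≤ 0 ∧
      (∀ z : H, ∀ τ : ℝ, g z ≤ (τ : EReal) → ⟪w, z⟫_ℝ + τ * s < u) ∧
      u < ⟪w, y⟫_ℝ + μ * s := by
  have hny : ((y, μ) : H × ℝ) ∉ Epi g := by
    simp only [Epi, Set.mem_setOf_eq, not_le]; exact hμ
  obtain ⟨φ, u, hsep, hpt⟩ :=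
    geometric_hahn_banach_closed_point (epi_convex hconv hbot) (epi_closed hlsc) hny
  set w : H := (InnerProductSpace.toDual ℝ H).symm (φ.comp (ContinuousLinearMap.inl ℝ H ℝ))
    with hw
  set s : ℝ := φ (0, 1) with hs
  have hφ : ∀ (z : H) (τ : ℝ), φ (z, τ) = ⟪w, z⟫_ℝ + τ * s := by
    intro z τ
    have hd : ((z, τ) : H × ℝ) = (z, (0:ℝ)) + τ • ((0:H), (1:ℝ)) := by ext <;> simp
    rw [hd, map_add, map_smul, smul_eq_mul, hw]
    congr 1
    rw [InnerProductSpace.toDual_symm_apply]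
    rfl
  have hsle : s ≤ 0 := by
    by_contra hpos
    push_neg at hpos
    set n : ℝ := max 0 ((u - ⟪w, x₁⟫_ℝ - c₁ * s) / s) with hn
    have hn0 : 0 ≤ n := le_max_left _ _
    have hmem : ((x₁, c₁ + n) : H × ℝ) ∈ Epi g := by
      simp only [Epi, Set.mem_setOf_eq]
      refine le_trans hx₁ ?_
      exact_mod_cast by linarith
    have := hsep _ hmem
    rw [hφ] at this
    have hge : (u - ⟪w, x₁⟫_ℝ - c₁ * s) / s ≤ n := le_max_right _ _
    have : u - ⟪w, x₁⟫_ℝ - c₁ * s ≤ n * s := by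
      rw [div_le_iff₀ hpos] at hge; linarith [hge]
    nlinarith [this]
  refine ⟨w, s, u, hsle, ?_, ?_⟩
  · intro z τ hzτ
    have hmem : ((z, τ) : H × ℝ) ∈ Epi g := hzτ
    have := hsep _ hmem
    rwa [hφ] at this
  · have := hpt
    rwa [hφ] at this


/-- From a separating functional with `s < 0`, build an affine minorant of `g`. -/
lemma minorant_of_sep {g : H → EReal} (hbot : ∀ z : H, g z ≠ ⊥) {w : H} {s u : ℝ} (hs : s < 0)
    (hsepa : ∀ z : H, ∀ τ : ℝ, g z ≤ (τ : EReal) → ⟪w, z⟫_ℝ + τ * s < u) (y : H) :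
    ∀ z : H, ((((⟪w, y⟫_ℝ - u) / (-s)) + ⟪(-s)⁻¹ • w, z - y⟫_ℝ : ℝ) : EReal) ≤ g z := by
  intro z
  by_cases hz : g z = ⊤
  · rw [hz]; exact le_top
  obtain ⟨c, hc⟩ := exists_real hz (hbot z)
  have hcs := hsepa z c (le_of_eq hc)
  have hν : (0:ℝ) < -s := by linarith
  have hval : (⟪w, y⟫_ℝ - u) / (-s) + ⟪(-s)⁻¹ • w, z - y⟫_ℝ ≤ c := by
    have hcomb : (⟪w, y⟫_ℝ - u) / (-s) + ⟪(-s)⁻¹ • w, z - y⟫_ℝ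
        = (⟪w, z⟫_ℝ - u) / (-s) := by
      have hsne : s ≠ 0 := ne_of_lt hs
      rw [real_inner_smul_left, inner_sub_right]
      field_simp
      ring
    rw [hcomb, div_le_iff₀ hν]
    have hring : c * -s = -(c * s) := by ring
    linarith [hcs]
  calc (((⟪w, y⟫_ℝ - u) / (-s) + ⟪(-s)⁻¹ • w, z - y⟫_ℝ : ℝ) : EReal)
      ≤ ((c : ℝ) : EReal) := by exact_mod_cast hval
    _ = g z := hc.symm

/-- Base affine minorant, centered at a point of the domain. -/
lemma exists_minorant_base {g : H → EReal} (hconv : ERealConvexOn g) (hbot : ∀ z : H, g z ≠ ⊥)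
    (hlsc : LowerSemicontinuous g)
    {x₀ : H} {g0 : ℝ} (hx₀ : g x₀ = (g0 : EReal)) :
    ∃ (w : H) (β : ℝ), ∀ z : H, ((β + ⟪w, z - x₀⟫_ℝ : ℝ) : EReal) ≤ g z := by
  have hμ : ((g0 - 1 : ℝ) : EReal) < g x₀ := by
    rw [hx₀]; exact_mod_cast (by linarith : g0 - 1 < g0)
  obtain ⟨w, s, u, hs, hsepa, hpt⟩ := sep_unpack hconv hbot hlsc (le_of_eq hx₀) hμ
  rcases lt_or_eq_of_le hs with hslt | hseq
  · exact ⟨(-s)⁻¹ • w, (⟪w, x₀⟫_ℝ - u) / (-s), minorant_of_sep hbot hslt hsepa x₀⟩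
  · exfalso
    have h1 := hsepa x₀ g0 (le_of_eq hx₀)
    rw [hseq] at h1 hpt
    simp only [mul_zero, add_zero] at h1 hpt
    linarith

/-- Affine minorants with level at `y` exceeding any `μ < g y`. -/
lemma exists_minorant {g : H → EReal} (hconv : ERealConvexOn g) (hbot : ∀ z : H, g z ≠ ⊥)
    (hlsc : LowerSemicontinuous g)
    {x₀ : H} {g0 : ℝ} (hx₀ : g x₀ = (g0 : EReal))
    {y : H} {μ : ℝ} (hμ : (μ : EReal) < g y) :
    ∃ (w : H) (β : ℝ), μ ≤ β ∧ ∀ z : H, ((β + ⟪w, z - y⟫_ℝ : ℝ) : EReal) ≤ g z := by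
  obtain ⟨w, s, u, hs, hsepa, hpt⟩ := sep_unpack hconv hbot hlsc (le_of_eq hx₀) hμ
  rcases lt_or_eq_of_le hs with hslt | hseq
  · refine ⟨(-s)⁻¹ • w, (⟪w, y⟫_ℝ - u) / (-s), ?_, minorant_of_sep hbot hslt hsepa y⟩
    have hν : (0:ℝ) < -s := by linarith
    rw [le_div_iff₀ hν]
    nlinarith [hpt]
  · -- vertical separator: boost a base minorant
    obtain ⟨w₁, β₁, hbase⟩ := exists_minorant_base hconv hbot hlsc hx₀
    rw [hseq] at hpt
    simp only [mul_zero, add_zero] at hpt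
    set δ₀ : ℝ := ⟪w, y⟫_ℝ - u with hδ₀
    have hδ₀pos : 0 < δ₀ := by simp only [hδ₀]; linarith
    set κ : ℝ := max 0 ((μ - β₁ - ⟪w₁, y - x₀⟫_ℝ) / δ₀) with hκ
    have hκ0 : 0 ≤ κ := le_max_left _ _
    refine ⟨w₁ + κ • w, β₁ + ⟪w₁, y - x₀⟫_ℝ + κ * δ₀, ?_, ?_⟩
    · have : (μ - β₁ - ⟪w₁, y - x₀⟫_ℝ) / δ₀ ≤ κ := le_max_right _ _
      rw [div_le_iff₀ hδ₀pos] at this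
      linarith
    · intro z
      by_cases hz : g z = ⊤
      · rw [hz]; exact le_top
      obtain ⟨c, hc⟩ := exists_real hz (hbot z)
      have hb := hbase z
      rw [hc] at hb ⊢
      have hbr : β₁ + ⟪w₁, z - x₀⟫_ℝ ≤ c := by exact_mod_cast hb
      have hwz : ⟪w, z⟫_ℝ < u := by
        have := hsepa z c (le_of_eq hc)
        rw [hseq] at this
        simpa using this
      have hgoal : β₁ + ⟪w₁, y - x₀⟫_ℝ + κ * δ₀ + ⟪w₁ + κ • w, z - y⟫_ℝ ≤ c := by
        have hexp : ⟪w₁ + κ • w, z - y⟫_ℝ = ⟪w₁, z - y⟫_ℝ + κ * ⟪w, z - y⟫_ℝ := by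
          rw [inner_add_left, real_inner_smul_left]
        have h1 : ⟪w₁, y - x₀⟫_ℝ + ⟪w₁, z - y⟫_ℝ = ⟪w₁, z - x₀⟫_ℝ := by
          rw [← inner_add_right]; congr 1; abel
        have h2 : ⟪w, z - y⟫_ℝ = ⟪w, z⟫_ℝ - ⟪w, y⟫_ℝ := inner_sub_right _ _ _
        rw [hexp, h2]
        have hκterm : κ * δ₀ + κ * (⟪w, z⟫_ℝ - ⟪w, y⟫_ℝ) = κ * (⟪w, z⟫_ℝ - u) := by
          simp only [hδ₀]; ring
        nlinarith [mul_nonneg hκ0 (by linarith : (0:ℝ) ≤ u - ⟪w, z⟫_ℝ), hbr, h1]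
      exact_mod_cast hgoal


/-- The dual-gap function `A(x) = f(x₀) - e_f(x) + ½‖x-x₀‖²`. -/
def Aenv (f : H → EReal) (P : H → H) (x₀ : H) (f0 : ℝ) (x : H) : ℝ :=
  f0 - ((f (P x)).toReal + 1/2 * ‖x - P x‖ ^ 2) + 1/2 * ‖x - x₀‖ ^ 2

section AenvLemmas

variable {f : H → EReal} {P : H → H} {x₀ : H} {f0 : ℝ}

lemma coe_fP (hprox : ∀ x, IsProx f x (P x)) (hbot : ∀ z, f z ≠ ⊥) (hne : f x₀ ≠ ⊤) (x : H) :
    f (P x) = (((f (P x)).toReal : ℝ) : EReal) :=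
  (EReal.coe_toReal (prox_ne_top (hprox x) hne) (hbot _)).symm

lemma quad_id1 (v w c d : H) :
    -(1/2*‖v - c‖^2) + 1/2*‖w - c‖^2 + 1/2*‖v - d‖^2 - 1/2*‖w - d‖^2 = ⟪c - d, v - w⟫_ℝ := by
  simp only [norm_sub_sq_real, inner_sub_left, inner_sub_right,
    real_inner_comm v c, real_inner_comm w c, real_inner_comm v d, real_inner_comm w d]
  ring

lemma quad_id2 (v w qv qw d : H) :
    (1/2*‖v - d‖^2 - 1/2*‖w - d‖^2 - ⟪qw - d, v - w⟫_ℝ - 1/2*‖v - w‖^2)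
      - ⟪w - qw, qv - qw⟫_ℝ - 1/2*‖v - qv‖^2 + 1/2*‖w - qw‖^2
    = ⟪w - qw, v - qv⟫_ℝ - 1/2*‖w - qw‖^2 - 1/2*‖v - qv‖^2 := by
  simp only [norm_sub_sq_real, inner_sub_left, inner_sub_right,
    real_inner_comm v qw, real_inner_comm w qw, real_inner_comm v qv, real_inner_comm w qv,
    real_inner_comm v d, real_inner_comm w d, real_inner_comm qv qw, real_inner_comm qv d,
    real_inner_comm qw d, real_inner_comm v w, real_inner_self_eq_norm_sq]
  ring

lemma Aenv_nonneg (hprox : ∀ x, IsProx f x (P x)) (hbot : ∀ z, f z ≠ ⊥)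
    (hf0 : f x₀ = (f0 : EReal)) (x : H) : 0 ≤ Aenv f P x₀ f0 x := by
  have hne : f x₀ ≠ ⊤ := by rw [hf0]; exact EReal.coe_ne_top _
  have h := prox_real_ineq (hprox x) (coe_fP hprox hbot hne x) hf0
  unfold Aenv
  linarith

/-- `x ↦ P x - x₀` is a subgradient of `Aenv`. -/
lemma Aenv_subgrad (hprox : ∀ x, IsProx f x (P x)) (hbot : ∀ z, f z ≠ ⊥)
    (hne : f x₀ ≠ ⊤) (v w : H) :
    Aenv f P x₀ f0 w + ⟪P w - x₀, v - w⟫_ℝ ≤ Aenv f P x₀ f0 v := by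
  have h := prox_real_ineq (hprox v) (coe_fP hprox hbot hne v) (coe_fP hprox hbot hne w)
  have hid := quad_id1 v w (P w) x₀
  unfold Aenv
  linarith

/-- Smoothness (descent) inequality for `Aenv`. -/
lemma Aenv_descent (hconv : ERealConvexOn f) (hprox : ∀ x, IsProx f x (P x))
    (hbot : ∀ z, f z ≠ ⊥) (hne : f x₀ ≠ ⊤) (v w : H) :
    Aenv f P x₀ f0 v
      ≤ Aenv f P x₀ f0 w + ⟪P w - x₀, v - w⟫_ℝ + 1/2 * ‖v - w‖ ^ 2 := by
  have hsub := subgrad_at_prox hconv (hprox w) (coe_fP hprox hbot hne w)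
    (coe_fP hprox hbot hne v)
  have hid := quad_id2 v w (P v) (P w) x₀
  have hbd : ⟪w - P w, v - P v⟫_ℝ ≤ 1/2*‖w - P w‖^2 + 1/2*‖v - P v‖^2 := by
    nlinarith [real_inner_le_norm (w - P w) (v - P v), sq_nonneg (‖w - P w‖ - ‖v - P v‖),
      norm_nonneg (w - P w), norm_nonneg (v - P v)]
  unfold Aenv
  nlinarith [hsub, hid, hbd]

/-- Points where `Aenv` is arbitrarily small. -/
lemma Aenv_small (hconv : ERealConvexOn f) (hprox : ∀ x, IsProx f x (P x))
    (hbot : ∀ z, f z ≠ ⊥) (hlsc : LowerSemicontinuous f)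
    (hf0 : f x₀ = (f0 : EReal)) {δ : ℝ} (hδ : 0 < δ) :
    ∃ zδ : H, Aenv f P x₀ f0 zδ ≤ δ := by
  have hne : f x₀ ≠ ⊤ := by rw [hf0]; exact EReal.coe_ne_top _
  have hμ : ((f0 - δ : ℝ) : EReal) < f x₀ := by
    rw [hf0]; exact_mod_cast (by linarith : f0 - δ < f0)
  obtain ⟨σ, lv, hlev, hmin⟩ := exists_minorant hconv hbot hlsc hf0 hμ
  refine ⟨x₀ + σ, ?_⟩
  set p' := P (x₀ + σ) with hp'
  have hm := hmin p'
  rw [coe_fP hprox hbot hne (x₀ + σ)] at hm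
  have hmr : lv + ⟪σ, p' - x₀⟫_ℝ ≤ (f (P (x₀ + σ))).toReal := by
    rw [hp']; exact_mod_cast hm
  have hn1 : ‖x₀ + σ - x₀‖ = ‖σ‖ := by rw [add_sub_cancel_left]
  have hn2 : ‖x₀ + σ - p'‖ ^ 2 = ‖σ‖^2 - 2*⟪σ, p' - x₀⟫_ℝ + ‖p' - x₀‖^2 := by
    rw [show x₀ + σ - p' = σ - (p' - x₀) by abel, norm_sub_sq_real]
  unfold Aenv
  rw [← hp', hn1, hn2]
  nlinarith [sq_nonneg ‖p' - x₀‖, hmr, hlev]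

end AenvLemmas

lemma aux_mul_div_le {b e : ℝ} (hb : 0 ≤ b) (he : 0 < e) :
    b * (e / (4 * (b + 1))) ≤ e / 4 := by
  have h1 : (0:ℝ) < 4 * (b + 1) := by linarith
  rw [mul_div_assoc', div_le_div_iff₀ h1 (by norm_num : (0:ℝ) < 4)]
  nlinarith

lemma le_of_sq_le_sq' {a b : ℝ} (ha : 0 ≤ a) (hb : 0 < b) (h : a^2 ≤ b^2) : a ≤ b := by
  nlinarith [sq_nonneg (a + b), sq_nonneg (a - b)]


set_option maxHeartbeats 4000000 in
/-- Key comparison: the dual-gap function of `f` is dominated by that of `g`. -/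
theorem key_A_le_B
    {f g : H → EReal} {P Q : H → H} {x₀ : H} {f0 g0 : ℝ}
    (hfconv : ERealConvexOn f) (hfbot : ∀ z, f z ≠ ⊥) (hflsc : LowerSemicontinuous f)
    (hgconv : ERealConvexOn g) (hgbot : ∀ z, g z ≠ ⊥)
    (hf0 : f x₀ = (f0 : EReal)) (hg0 : g x₀ = (g0 : EReal))
    (hP : ∀ x, IsProx f x (P x)) (hQ : ∀ x, IsProx g x (Q x))
    (hyp : ∀ x, ‖P x - x₀‖ ≤ ‖Q x - x₀‖) (x : H) :
    Aenv f P x₀ f0 x ≤ Aenv g Q x₀ g0 x := by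
  set A : H → ℝ := Aenv f P x₀ f0 with hA
  set B : H → ℝ := Aenv g Q x₀ g0 with hB
  clear_value A B
  have hfne : f x₀ ≠ ⊤ := by rw [hf0]; exact EReal.coe_ne_top _
  have hgne : g x₀ ≠ ⊤ := by rw [hg0]; exact EReal.coe_ne_top _
  have hB0 : ∀ z, 0 ≤ B z := by
    intro z; rw [hB]; exact Aenv_nonneg hQ hgbot hg0 z
  have main : ∀ ε : ℝ, 0 < ε → A x ≤ B x + ε := by
    intro ε hε
    -- anchor point with small A
    obtain ⟨z, hz0⟩ := Aenv_small (P := P) (f0 := f0) hfconv hP hfbot hflsc hf0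
      (show (0:ℝ) < ε/4 by linarith)
    have hz : A z ≤ ε/4 := by rw [hA]; exact hz0
    -- step size
    set τ : ℝ := min 1 (ε / (4 * (B x + 1))) with hτdef
    have hBx1 : 0 < B x + 1 := by have := hB0 x; linarith
    have hτ0 : 0 < τ := lt_min one_pos (by positivity)
    have hτ1 : τ ≤ 1 := min_le_left _ _
    have hτε : τ ≤ ε / (4 * (B x + 1)) := min_le_right _ _
    clear_value τ
    have hτsq : τ^2 ≤ τ := by
      have h1 : τ * τ ≤ τ * 1 := mul_le_mul_of_nonneg_left hτ1 hτ0.le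
      calc τ^2 = τ * τ := sq τ
        _ ≤ τ * 1 := h1
        _ = τ := mul_one τ
    set c : ℝ := τ - τ^2/2 with hc
    have hcpos : 0 < c := by rw [hc]; linarith [hτsq, hτ0]
    clear_value c
    -- the iteration
    set T : H → H := fun zz => zz - τ • (Q zz - x₀) with hT
    set X : ℕ → H := fun k => T^[k] x with hX
    have hX0 : X 0 = x := rfl
    have hXs : ∀ k, X (k+1) = X k - τ • (Q (X k) - x₀) := by
      intro k
      simp only [hX, Function.iterate_succ_apply', hT]
    clear_value T X
    set G : ℕ → H := fun k => Q (X k) - x₀ with hG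
    have hGk : ∀ k, G k = Q (X k) - x₀ := fun _ => rfl
    clear_value G
    have hdiff : ∀ k, X (k+1) - X k = -(τ • G k) := by
      intro k; rw [hXs k, hGk k]; abel
    -- per-step descent of B
    have hBstep : ∀ k, B (X (k+1)) ≤ B (X k) - c * ‖G k‖^2 := by
      intro k
      have hd := Aenv_descent (f0 := g0) hgconv hQ hgbot hgne (X (k+1)) (X k)
      rw [← hB, ← hGk k] at hd
      have h2 : ⟪G k, X (k+1) - X k⟫_ℝ = -(τ * ‖G k‖^2) := by
        rw [hdiff k, inner_neg_right, real_inner_smul_right, real_inner_self_eq_norm_sq]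
      have h3 : ‖X (k+1) - X k‖^2 = τ^2 * ‖G k‖^2 := by
        rw [hdiff k, norm_neg, norm_smul, Real.norm_eq_abs, mul_pow, sq_abs]
      rw [h2, h3] at hd
      calc B (X (k+1)) ≤ B (X k) + -(τ * ‖G k‖ ^ 2) + 1/2 * (τ^2 * ‖G k‖^2) := hd
        _ = B (X k) - c * ‖G k‖^2 := by rw [hc]; ring
    -- per-step control of A
    have hAstep : ∀ k, A (X k) ≤ A (X (k+1)) + τ * ‖G k‖^2 := by
      intro k
      have hs := Aenv_subgrad (f0 := f0) hP hfbot hfne (X (k+1)) (X k)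
      rw [← hA] at hs
      have h2 : ⟪P (X k) - x₀, X (k+1) - X k⟫_ℝ = -(τ * ⟪P (X k) - x₀, G k⟫_ℝ) := by
        rw [hdiff k, inner_neg_right, real_inner_smul_right]
      have hcs : ⟪P (X k) - x₀, G k⟫_ℝ ≤ ‖G k‖^2 := by
        have h1 : ⟪P (X k) - x₀, G k⟫_ℝ ≤ ‖P (X k) - x₀‖ * ‖G k‖ := real_inner_le_norm _ _
        have h2' : ‖P (X k) - x₀‖ ≤ ‖G k‖ := by rw [hGk k]; exact hyp (X k)
        have h3 : ‖P (X k) - x₀‖ * ‖G k‖ ≤ ‖G k‖ * ‖G k‖ :=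
          mul_le_mul_of_nonneg_right h2' (norm_nonneg _)
        have h4 : ‖G k‖ * ‖G k‖ = ‖G k‖^2 := (sq ‖G k‖).symm
        linarith
      rw [h2] at hs
      have h5 : τ * ⟪P (X k) - x₀, G k⟫_ℝ ≤ τ * ‖G k‖^2 :=
        mul_le_mul_of_nonneg_left hcs hτ0.le
      linarith
    -- partial sums of squared gradients
    set S : ℕ → ℝ := fun K => ∑ k ∈ Finset.range K, ‖G k‖^2 with hS
    have hS0 : S 0 = 0 := by rw [hS]; simp
    have hSstep : ∀ K, S (K+1) = S K + ‖G K‖^2 := by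
      intro K; rw [hS]; simp [Finset.sum_range_succ]
    have hSnn : ∀ K, 0 ≤ S K := by
      intro K; rw [hS]; exact Finset.sum_nonneg fun j _ => sq_nonneg _
    have hCSall : ∀ K, (∑ j ∈ Finset.range K, ‖G j‖)^2 ≤ (K : ℝ) * S K := by
      intro K
      have h := sq_sum_le_card_mul_sum_sq (s := Finset.range K) (f := fun j => ‖G j‖)
      rw [hS]
      simpa [Finset.card_range] using h
    clear_value S
    have hSmono : Monotone S := by
      apply monotone_nat_of_le_succ
      intro K; rw [hSstep]; linarith [sq_nonneg ‖G K‖]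
    have hSsum : ∀ K, c * S K ≤ B x - B (X K) := by
      intro K
      induction K with
      | zero => rw [hS0, hX0]; simp
      | succ K ih =>
        have h1 := hBstep K
        rw [hSstep]
        have h2 : c * (S K + ‖G K‖^2) = c * S K + c * ‖G K‖^2 := by ring
        linarith
    have hSbd : ∀ K, S K ≤ B x / c := by
      intro K
      rw [le_div_iff₀ hcpos]
      have h1 := hSsum K
      have h2 := hB0 (X K)
      have h3 : S K * c = c * S K := by ring
      linarith
    have hAsum : ∀ K, A x ≤ A (X K) + τ * S K := by
      intro K
      induction K with
      | zero => rw [hS0, hX0]; simp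
      | succ K ih =>
        have h1 := hAstep K
        rw [hSstep]
        have h2 : τ * (S K + ‖G K‖^2) = τ * S K + τ * ‖G K‖^2 := by ring
        linarith
    -- limit of partial sums
    have hbdd : BddAbove (Set.range S) := by
      refine ⟨B x / c, ?_⟩
      rintro _ ⟨K, rfl⟩
      exact hSbd K
    set L : ℝ := sSup (Set.range S) with hL
    clear_value L
    -- smallness thresholds
    set D : ℝ := ‖x - z‖ with hD
    clear_value D
    have hDnn : (0:ℝ) ≤ D := by rw [hD]; exact norm_nonneg _
    set δ₁ : ℝ := (ε/4)^2 / (D^2 + 1) with hδ₁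
    set δ₂ : ℝ := (ε/4)^2 / (2 * τ^2 * (B x / c + 1)) with hδ₂
    clear_value δ₁ δ₂
    have hBc : 0 ≤ B x / c := div_nonneg (hB0 x) hcpos.le
    have hδ₁0 : 0 < δ₁ := by rw [hδ₁]; positivity
    have hδ₂0 : 0 < δ₂ := by rw [hδ₂]; positivity
    set δ : ℝ := min δ₁ (δ₂ / 2) with hδdef
    clear_value δ
    have hδ0 : 0 < δ := by rw [hδdef]; exact lt_min hδ₁0 (by linarith)
    have hδle1 : δ ≤ δ₁ := by rw [hδdef]; exact min_le_left _ _
    have hδle2 : δ ≤ δ₂/2 := by rw [hδdef]; exact min_le_right _ _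
    -- find K₀ with S K₀ > L - δ
    have hlt : L - δ < sSup (Set.range S) := by rw [← hL]; linarith
    obtain ⟨_, ⟨K₀, rfl⟩, hK₀⟩ := exists_lt_of_lt_csSup (Set.range_nonempty S) hlt
    have htail : ∀ n, S n - S K₀ ≤ δ := by
      intro n
      have h1 : S n ≤ L := by rw [hL]; exact le_csSup hbdd ⟨n, rfl⟩
      linarith
    have hGsmall : ∀ k, K₀ ≤ k → ‖G k‖^2 ≤ δ := by
      intro k hk
      have h1 : S K₀ ≤ S k := hSmono hk
      have h2 := hSstep k
      have h3 := htail (k+1)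
      linarith
    -- window search
    set M : ℕ := K₀ + 1 with hM
    have hMpos : 0 < M := by rw [hM]; exact Nat.succ_pos K₀
    clear_value M
    have hM0 : (0:ℝ) < (M:ℝ) := by exact_mod_cast hMpos
    have hwin : ∑ k ∈ Finset.Ico K₀ (K₀ + M), ‖G k‖^2 ≤ δ := by
      have h1 : ∑ k ∈ Finset.Ico K₀ (K₀ + M), ‖G k‖^2 = S (K₀ + M) - S K₀ := by
        rw [hS, Finset.sum_Ico_eq_sub _ (Nat.le_add_right _ _)]
      rw [h1]; exact htail _
    have hexk : ∃ k ∈ Finset.Ico K₀ (K₀ + M), ‖G k‖^2 ≤ δ / M := by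
      by_contra hcon
      push_neg at hcon
      have hlt2 : ∑ k ∈ Finset.Ico K₀ (K₀ + M), (δ / M : ℝ)
          < ∑ k ∈ Finset.Ico K₀ (K₀ + M), ‖G k‖^2 := by
        apply Finset.sum_lt_sum_of_nonempty
        · rw [Finset.nonempty_Ico]; omega
        · intro i hi; exact hcon i hi
      rw [Finset.sum_const, Nat.card_Ico] at hlt2
      have hMc : (K₀ + M - K₀) = M := by omega
      rw [hMc] at hlt2
      have heq : (M : ℝ) * (δ / M) = δ := by field_simp
      rw [nsmul_eq_mul, heq] at hlt2
      linarith
    obtain ⟨k, hkmem, hksmall⟩ := hexk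
    rw [Finset.mem_Ico] at hkmem
    have hkK₀ : K₀ ≤ k := hkmem.1
    have hk2M : (k : ℝ) ≤ 2 * M := by
      have h1 : k < 2 * M := by omega
      exact_mod_cast h1.le
    have hkG : (k : ℝ) * ‖G k‖^2 ≤ 2 * δ := by
      have h1 : (k:ℝ) * ‖G k‖^2 ≤ 2 * M * (δ / M) := by
        apply mul_le_mul hk2M hksmall (sq_nonneg _)
        positivity
      have h2 : 2 * (M:ℝ) * (δ / M) = 2 * δ := by field_simp
      linarith [h1.trans_eq h2]
    -- path length bound
    have hpath : ∀ K, ‖X K - z‖ ≤ D + τ * ∑ j ∈ Finset.range K, ‖G j‖ := by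
      intro K
      induction K with
      | zero =>
        rw [hX0, ← hD]
        simp
      | succ K ih =>
        have h1 : X (K+1) - z = (X K - z) + -(τ • G K) := by
          rw [← hdiff K]; abel
        calc ‖X (K+1) - z‖ ≤ ‖X K - z‖ + ‖-(τ • G K)‖ := by rw [h1]; exact norm_add_le _ _
          _ = ‖X K - z‖ + τ * ‖G K‖ := by
              rw [norm_neg, norm_smul, Real.norm_eq_abs, abs_of_pos hτ0]
          _ ≤ D + τ * ∑ j ∈ Finset.range K, ‖G j‖ + τ * ‖G K‖ := by linarith
          _ = D + τ * ∑ j ∈ Finset.range (K+1), ‖G j‖ := by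
              rw [Finset.sum_range_succ]; ring
    have hCS : (∑ j ∈ Finset.range k, ‖G j‖)^2 ≤ (k : ℝ) * S k := hCSall k
    -- tail bound on A (X k)
    have htailA : A (X k) ≤ A z + ε/4 + ε/4 := by
      have hsub := Aenv_subgrad (f0 := f0) hP hfbot hfne z (X k)
      rw [← hA] at hsub
      have h0 : A (X k) ≤ A z + ⟪P (X k) - x₀, X k - z⟫_ℝ := by
        have he : ⟪P (X k) - x₀, z - X k⟫_ℝ = -⟪P (X k) - x₀, X k - z⟫_ℝ := by
          rw [← inner_neg_right]; congr 1; abel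
        rw [he] at hsub
        linarith
      have h1 : ⟪P (X k) - x₀, X k - z⟫_ℝ ≤ ‖G k‖ * ‖X k - z‖ := by
        have ha1 : ⟪P (X k) - x₀, X k - z⟫_ℝ ≤ ‖P (X k) - x₀‖ * ‖X k - z‖ :=
          real_inner_le_norm _ _
        have ha2 : ‖P (X k) - x₀‖ ≤ ‖G k‖ := by rw [hGk k]; exact hyp (X k)
        have ha3 : ‖P (X k) - x₀‖ * ‖X k - z‖ ≤ ‖G k‖ * ‖X k - z‖ :=
          mul_le_mul_of_nonneg_right ha2 (norm_nonneg _)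
        linarith
      have h2 : ‖G k‖ * ‖X k - z‖ ≤ ‖G k‖ * D + τ * (‖G k‖ * ∑ j ∈ Finset.range k, ‖G j‖) := by
        have hp := hpath k
        have hGnn : 0 ≤ ‖G k‖ := norm_nonneg _
        have hb1 : ‖G k‖ * ‖X k - z‖ ≤ ‖G k‖ * (D + τ * ∑ j ∈ Finset.range k, ‖G j‖) :=
          mul_le_mul_of_nonneg_left hp hGnn
        have hb2 : ‖G k‖ * (D + τ * ∑ j ∈ Finset.range k, ‖G j‖)
            = ‖G k‖ * D + τ * (‖G k‖ * ∑ j ∈ Finset.range k, ‖G j‖) := by ring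
        linarith
      have hp1 : ‖G k‖ * D ≤ ε/4 := by
        have hGd : ‖G k‖^2 ≤ δ₁ := le_trans (hGsmall k hkK₀) hδle1
        have e1 : δ₁ * (D^2 + 1) = (ε/4)^2 := by
          rw [hδ₁]; field_simp
        have hsq : (‖G k‖ * D)^2 ≤ (ε/4)^2 := by
          have ha1 : (‖G k‖ * D)^2 = ‖G k‖^2 * D^2 := by ring
          rw [ha1, ← e1]
          have hb1 : 0 ≤ (δ₁ - ‖G k‖^2) * D^2 :=
            mul_nonneg (sub_nonneg.mpr hGd) (sq_nonneg D)
          have hb2 : (δ₁ - ‖G k‖^2) * D^2 = δ₁ * D^2 - ‖G k‖^2 * D^2 := by ring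
          have hb3 : δ₁ * (D^2 + 1) = δ₁ * D^2 + δ₁ := by ring
          linarith [hδ₁0]
        exact le_of_sq_le_sq' (mul_nonneg (norm_nonneg _) hDnn) (by linarith) hsq
      have hp2 : τ * (‖G k‖ * ∑ j ∈ Finset.range k, ‖G j‖) ≤ ε/4 := by
        have hsumnn : 0 ≤ ∑ j ∈ Finset.range k, ‖G j‖ :=
          Finset.sum_nonneg fun j _ => norm_nonneg _
        have h4 : ‖G k‖^2 * (∑ j ∈ Finset.range k, ‖G j‖)^2
            ≤ ‖G k‖^2 * ((k:ℝ) * S k) :=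
          mul_le_mul_of_nonneg_left hCS (sq_nonneg _)
        have h4' : ‖G k‖^2 * ((k:ℝ) * S k) = ((k:ℝ) * ‖G k‖^2) * S k := by ring
        have h5 : ((k:ℝ) * ‖G k‖^2) * S k ≤ (2*δ) * (B x / c) :=
          mul_le_mul hkG (hSbd k) (hSnn k) (by linarith)
        have h7 : (2*δ) * (B x / c) ≤ δ₂ * (B x / c + 1) := by
          have h7a : (2*δ) * (B x / c) ≤ δ₂ * (B x / c) :=
            mul_le_mul_of_nonneg_right (by linarith) hBc
          have h7b : δ₂ * (B x / c + 1) = δ₂ * (B x / c) + δ₂ := by ring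
          linarith
        have hq : ‖G k‖^2 * (∑ j ∈ Finset.range k, ‖G j‖)^2 ≤ δ₂ * (B x / c + 1) := by
          calc ‖G k‖^2 * (∑ j ∈ Finset.range k, ‖G j‖)^2
              ≤ ((k:ℝ) * ‖G k‖^2) * S k := by rw [← h4']; exact h4
            _ ≤ (2*δ) * (B x / c) := h5
            _ ≤ δ₂ * (B x / c + 1) := h7
        have he2 : δ₂ * (2 * τ^2 * (B x / c + 1)) = (ε/4)^2 := by
          have hz1 : (2 * τ^2 * (B x / c + 1)) ≠ 0 := by positivity
          rw [hδ₂]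
          exact div_mul_cancel₀ _ hz1
        have he3 : τ^2 * (δ₂ * (B x / c + 1)) = (ε/4)^2 / 2 := by
          linear_combination he2 / 2
        have hsq : (τ * (‖G k‖ * ∑ j ∈ Finset.range k, ‖G j‖))^2 ≤ (ε/4)^2 := by
          have h3 : (τ * (‖G k‖ * ∑ j ∈ Finset.range k, ‖G j‖))^2
              = τ^2 * (‖G k‖^2 * (∑ j ∈ Finset.range k, ‖G j‖)^2) := by ring
          rw [h3]
          calc τ^2 * (‖G k‖^2 * (∑ j ∈ Finset.range k, ‖G j‖)^2)
              ≤ τ^2 * (δ₂ * (B x / c + 1)) := mul_le_mul_of_nonneg_left hq (sq_nonneg τ)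
            _ = (ε/4)^2 / 2 := he3
            _ ≤ (ε/4)^2 := by linarith [sq_nonneg (ε/4)]
        have hnn : 0 ≤ τ * (‖G k‖ * ∑ j ∈ Finset.range k, ‖G j‖) :=
          mul_nonneg hτ0.le (mul_nonneg (norm_nonneg _) hsumnn)
        exact le_of_sq_le_sq' hnn (by linarith) hsq
      calc A (X k) ≤ A z + ⟪P (X k) - x₀, X k - z⟫_ℝ := h0
        _ ≤ A z + ‖G k‖ * ‖X k - z‖ := by linarith
        _ ≤ A z + (‖G k‖ * D + τ * (‖G k‖ * ∑ j ∈ Finset.range k, ‖G j‖)) := by linarith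
        _ ≤ A z + ε/4 + ε/4 := by linarith
    -- final assembly
    have hfin1 : A x ≤ A (X k) + τ * S k := hAsum k
    have hfin2 : τ * S k ≤ B x + ε/4 := by
      have hcS : c * S k ≤ B x := by
        have h1 := hSsum k
        have h2 := hB0 (X k)
        linarith
      have hSk0 : 0 ≤ S k := hSnn k
      have hτc2 : τ - c ≤ τ * c := by
        have h3 : τ/2 ≤ c := by rw [hc]; linarith [hτsq]
        have h4 : τ * (τ/2) ≤ τ * c := mul_le_mul_of_nonneg_left h3 hτ0.le
        have h5 : τ * (τ/2) = τ^2/2 := by ring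
        have h6 : τ - c = τ^2/2 := by rw [hc]; ring
        linarith
      have h5 : (τ - c) * S k ≤ (τ * c) * S k := mul_le_mul_of_nonneg_right hτc2 hSk0
      have h6 : (τ * c) * S k = τ * (c * S k) := by ring
      have h7 : τ * (c * S k) ≤ τ * B x := mul_le_mul_of_nonneg_left hcS hτ0.le
      have h8 : τ * B x ≤ ε/4 := by
        have h9 : B x * τ ≤ B x * (ε / (4 * (B x + 1))) :=
          mul_le_mul_of_nonneg_left hτε (hB0 x)
        have h10 := aux_mul_div_le (hB0 x) hε
        have h11 : τ * B x = B x * τ := by ring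
        linarith
      have h12 : τ * S k = c * S k + (τ - c) * S k := by ring
      linarith
    calc A x ≤ A (X k) + τ * S k := hfin1
      _ ≤ (A z + ε/4 + ε/4) + (B x + ε/4) := by linarith [htailA, hfin2]
      _ ≤ B x + ε := by linarith [hz]
  by_contra hcon
  push_neg at hcon
  have := main ((A x - B x)/2) (by linarith)
  linarith


end ProxComparisonAux

open ProxComparisonAux

/-- **Comparison principle for convex functions through proximal mappings.** -/
theorem comparison_of_prox_norm_le
    (f g : H → EReal) (hf : Gamma0 f) (hg : Gamma0 g)
    (x₀ : H) (hx₀f : f x₀ ≠ ⊤) (hx₀g : g x₀ ≠ ⊤)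
    (proxf proxg : H → H)
    (hproxf : ∀ x, IsProx f x (proxf x)) (hproxg : ∀ x, IsProx g x (proxg x))
    (h : ∀ x, ‖proxf x - x₀‖ ≤ ‖proxg x - x₀‖) :
    ∀ x, g x - g x₀ ≤ f x - f x₀ := by
  obtain ⟨-, hfbot, hfconv, hflsc⟩ := hf
  obtain ⟨-, hgbot, hgconv, hglsc⟩ := hg
  obtain ⟨f0, hf0⟩ := exists_real hx₀f (hfbot x₀)
  obtain ⟨g0, hg0⟩ := exists_real hx₀g (hgbot x₀)
  have key := key_A_le_B hfconv hfbot hflsc hgconv hgbot hf0 hg0 hproxf hproxg h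
  intro y
  by_cases hfy : f y = ⊤
  · rw [hfy, hf0, EReal.top_sub_coe]
    exact le_top
  obtain ⟨fy, hfyr⟩ := exists_real hfy (hfbot y)
  -- Main claim via affine minorants of g at y
  have claim : ∀ μ : ℝ, (μ : EReal) < g y → μ ≤ fy - f0 + g0 := by
    intro μ hμ
    obtain ⟨w, β, hβμ, hmin⟩ := exists_minorant hgconv hgbot hglsc hg0 hμ
    set x : H := y + w with hx
    have hk := key x
    simp only [Aenv] at hk
    -- real values at the two prox points
    have hgne : g x₀ ≠ ⊤ := by rw [hg0]; exact EReal.coe_ne_top _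
    have hfPcoe : f (proxf x) = (((f (proxf x)).toReal : ℝ) : EReal) :=
      (EReal.coe_toReal (prox_ne_top (hproxf x) hx₀f) (hfbot _)).symm
    have hgQcoe : g (proxg x) = (((g (proxg x)).toReal : ℝ) : EReal) :=
      (EReal.coe_toReal (prox_ne_top (hproxg x) hx₀g) (hgbot _)).symm
    -- f-side envelope bound with test point y
    have hfenv : (f (proxf x)).toReal + 1/2 * ‖x - proxf x‖ ^ 2
        ≤ fy + 1/2 * ‖x - y‖ ^ 2 :=
      prox_real_ineq (hproxf x) hfPcoe hfyr
    have hxy : x - y = w := by rw [hx]; abel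
    rw [hxy] at hfenv
    -- minorant at the g-prox point
    have hm := hmin (proxg x)
    rw [hgQcoe] at hm
    have hmr : β + ⟪w, proxg x - y⟫_ℝ ≤ (g (proxg x)).toReal := by exact_mod_cast hm
    -- quadratic identity
    have hxq : x - proxg x = w + (y - proxg x) := by rw [hx]; abel
    have hid : ⟪w, proxg x - y⟫_ℝ + 1/2 * ‖x - proxg x‖ ^ 2
        = 1/2 * ‖w‖ ^ 2 + 1/2 * ‖y - proxg x‖ ^ 2 := by
      rw [hxq, norm_add_sq_real]
      simp only [inner_sub_right]
      ring
    have hsq : 0 ≤ 1/2 * ‖y - proxg x‖ ^ 2 := by positivity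
    linarith [hk, hfenv, hmr, hid, hβμ, hsq]
  by_cases hgy : g y = ⊤
  · exfalso
    have h1 := claim (fy - f0 + g0 + 1) (by rw [hgy]; exact EReal.coe_lt_top _)
    linarith
  · obtain ⟨gy, hgyr⟩ := exists_real hgy (hgbot y)
    have h2 : gy ≤ fy - f0 + g0 := by
      by_contra hcon
      push_neg at hcon
      have hlt : (((gy + (fy - f0 + g0))/2 : ℝ) : EReal) < g y := by
        rw [hgyr]
        exact_mod_cast (by linarith : (gy + (fy - f0 + g0))/2 < gy)
      have h3 := claim _ hlt
      linarith
    rw [hgyr, hg0, hfyr, hf0, ← EReal.coe_sub, ← EReal.coe_sub]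
    exact_mod_cast (by linarith : gy - g0 ≤ fy - f0)
end
end

section
/- Let H be a real Hilbert space, let ℓ ≥ 0, and let g ∈ Γ0(H) be such that its Fenchel conjugate g* is bounded from below. If ‖x‖ − ℓ ≤ ‖prox_g(x)‖ for all x ∈ H, then g(x) − g(0) ≤ ℓ‖x‖ for all x ∈ H. -/
open scoped InnerProductSpace
noncomputable section

variable {H : Type*} [NormedAddCommGroup H] [InnerProductSpace ℝ H] [CompleteSpace H]

set_option linter.unusedSectionVars false
set_option maxHeartbeats 800000

lemma prox_ne_top {g : H → EReal} (hg : Gamma0 g) {z p : H} (hp : IsProx g z p) :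
    g p ≠ ⊤ := by
  obtain ⟨y, hy⟩ := hg.1
  intro htop
  have h1 := hp y
  rw [htop, EReal.top_add_coe] at h1
  have h2 : g y + (((1:ℝ)/2 * ‖z - y‖ ^ 2 : ℝ) : EReal) < ⊤ :=
    EReal.add_lt_top hy (EReal.coe_ne_top _)
  exact absurd (lt_of_le_of_lt h1 h2) (lt_irrefl _)

/-- Subgradient inequality at a prox point. -/
lemma prox_subgrad_s3 {g : H → EReal} (hg : Gamma0 g) {z p : H} (hp : IsProx g z p)
    (y : H) : g p + ((⟪z - p, y - p⟫_ℝ : ℝ) : EReal) ≤ g y := by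
  rcases eq_or_ne (g y) ⊤ with hy | hy
  · rw [hy]; exact le_top
  have hpt : g p ≠ ⊤ := prox_ne_top hg hp
  set A := (g p).toReal with hA
  set B := (g y).toReal with hB
  have hgp : g p = (A : EReal) := (EReal.coe_toReal hpt (hg.2.1 p)).symm
  have hgy : g y = (B : EReal) := (EReal.coe_toReal hy (hg.2.1 y)).symm
  rw [hgp, hgy, ← EReal.coe_add, EReal.coe_le_coe_iff]
  have key : ∀ lam : ℝ, 0 < lam → lam ≤ 1 →
      A + ⟪z - p, y - p⟫_ℝ ≤ B + lam / 2 * ‖y - p‖ ^ 2 := by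
    intro lam hl0 hl1
    have hconv := hg.2.2.1 p y (1 - lam) lam (by linarith) (le_of_lt hl0) (by ring)
    rw [hgp, hgy, ← EReal.coe_mul, ← EReal.coe_mul, ← EReal.coe_add] at hconv
    have hprox := hp ((1 - lam) • p + lam • y)
    rw [hgp] at hprox
    have hchain : (A : EReal) + (((1:ℝ)/2 * ‖z - p‖ ^ 2 : ℝ) : EReal)
        ≤ (((1 - lam) * A + lam * B : ℝ) : EReal)
          + (((1:ℝ)/2 * ‖z - ((1 - lam) • p + lam • y)‖ ^ 2 : ℝ) : EReal) :=
      le_trans hprox (add_le_add hconv le_rfl)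
    rw [← EReal.coe_add, ← EReal.coe_add, EReal.coe_le_coe_iff] at hchain
    have hns : ‖z - ((1 - lam) • p + lam • y)‖ ^ 2
        = ‖z - p‖ ^ 2 - 2 * lam * ⟪z - p, y - p⟫_ℝ + lam ^ 2 * ‖y - p‖ ^ 2 := by
      have heq : z - ((1 - lam) • p + lam • y) = (z - p) - lam • (y - p) := by
        module
      rw [heq, norm_sub_sq_real, real_inner_smul_right, norm_smul]
      simp only [Real.norm_eq_abs, mul_pow, sq_abs]
      ring
    rw [hns] at hchain
    nlinarith [hchain, sq_nonneg lam]
  by_contra hcon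
  push_neg at hcon
  set ip := ⟪z - p, y - p⟫_ℝ
  set eps := A + ip - B with heps
  have heps0 : 0 < eps := by simp only [heps]; linarith
  set lam := min 1 (eps / (‖y - p‖ ^ 2 + 1)) with hlam
  have hl0 : 0 < lam := lt_min one_pos (div_pos heps0 (by positivity))
  have hl1 : lam ≤ 1 := min_le_left _ _
  have hk := key lam hl0 hl1
  have hle : lam / 2 * ‖y - p‖ ^ 2 < eps := by
    have h1 : lam ≤ eps / (‖y - p‖ ^ 2 + 1) := min_le_right _ _
    have h2 : lam * (‖y - p‖ ^ 2 + 1) ≤ eps := by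
      rw [← le_div_iff₀ (by positivity)]; exact h1
    nlinarith [sq_nonneg ‖y - p‖, hl0]
  linarith


/-- If `g* ` is bounded below and `‖x‖ - ℓ ≤ ‖prox_g x‖` for all `x`,
then `g - g 0 ≤ ℓ‖·‖`. -/
theorem le_mul_norm_of_norm_sub_le_prox_norm
    (ℓ : ℝ) (hℓ : 0 ≤ ℓ) (g : H → EReal) (hg : Gamma0 g)
    (hconj : ∃ c : ℝ, ∀ x, (c : EReal) ≤ fenchel g x)
    (proxg : H → H) (hproxg : ∀ x, IsProx g x (proxg x))
    (h : ∀ x, ‖x‖ - ℓ ≤ ‖proxg x‖) :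
    ∀ x, g x - g 0 ≤ ((ℓ * ‖x‖ : ℝ) : EReal) := by
  intro x
  rcases eq_or_ne (g 0) ⊤ with h0 | h0
  · rw [h0, sub_eq_add_neg, EReal.neg_top, EReal.add_bot]
    exact bot_le
  set r := (g 0).toReal with hr
  have hg0 : g 0 = (r : EReal) := (EReal.coe_toReal h0 (hg.2.1 0)).symm
  suffices hmain : g x ≤ ((r + ℓ * ‖x‖ : ℝ) : EReal) by
    rw [hg0]
    refine (EReal.sub_le_iff_le_add (Or.inl (EReal.coe_ne_bot r))
      (Or.inl (EReal.coe_ne_top r))).mpr ?_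
    rw [← EReal.coe_add]
    convert hmain using 2
    ring
  rcases eq_or_ne x 0 with rfl | hx
  · rw [hg0]
    simp only [norm_zero, mul_zero, add_zero, le_refl]
  have ht : 0 < ‖x‖ := norm_pos_iff.mpr hx
  set t := ‖x‖ with htdef
  set u := t⁻¹ • x with hu
  have hut : ‖u‖ = 1 := by rw [hu]; exact norm_smul_inv_norm hx
  have hxu : x = t • u := by
    rw [hu, smul_smul, mul_inv_cancel₀ (ne_of_gt ht), one_smul]
  set p₀ := proxg 0 with hp₀def
  have hp₀t : g p₀ ≠ ⊤ := prox_ne_top hg (hproxg 0)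
  set a₀ := (g p₀).toReal with ha₀
  have hgp₀ : g p₀ = (a₀ : EReal) := (EReal.coe_toReal hp₀t (hg.2.1 p₀)).symm
  set β := a₀ + ‖p₀‖ ^ 2 - r with hβ
  have minorant : ∀ y : H, ((β + r - ‖p₀‖ * ‖y‖ : ℝ) : EReal) ≤ g y := by
    intro y
    have hsg := prox_subgrad_s3 hg (hproxg 0) y
    rw [← hp₀def, hgp₀, ← EReal.coe_add] at hsg
    refine le_trans (EReal.coe_le_coe_iff.mpr ?_) hsg
    have hip : ⟪(0:H) - p₀, y - p₀⟫_ℝ = ‖p₀‖ ^ 2 - ⟪p₀, y⟫_ℝ := by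
      simp only [zero_sub, inner_neg_left, inner_sub_right,
        real_inner_self_eq_norm_sq]
      ring
    rw [hip]
    have hcs := real_inner_le_norm p₀ y
    simp only [hβ]
    nlinarith
  set K := ℓ + ‖p₀‖ + |β| with hK
  have hK0 : 0 ≤ K := by positivity
  have key : ∀ s : ℝ, t + ℓ + 1 ≤ s → ∃ w : H,
      g w ≤ ((r + ℓ * t : ℝ) : EReal) ∧ ‖w - x‖ ^ 2 ≤ 2 * t ^ 2 * K / s := by
    intro s hs
    set p := proxg (s • u) with hpdef
    set n := ‖p‖ with hn
    have hs0 : 0 < s := by linarith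
    have hsu : ‖s • u‖ = s := by
      rw [norm_smul, hut, mul_one, Real.norm_eq_abs, abs_of_pos hs0]
    have hns : s - ℓ ≤ n := by have := h (s • u); rwa [hsu] at this
    have hnt : t + 1 ≤ n := by linarith
    have hn0 : 0 < n := by linarith
    have hpt : g p ≠ ⊤ := prox_ne_top hg (hproxg _)
    set A := (g p).toReal with hA
    have hgp : g p = (A : EReal) := (EReal.coe_toReal hpt (hg.2.1 p)).symm
    have h1 : A + (n ^ 2 - s * ⟪u, p⟫_ℝ) ≤ r := by
      have hsg := prox_subgrad_s3 hg (hproxg (s • u)) 0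
      rw [← hpdef, hgp, hg0, ← EReal.coe_add, EReal.coe_le_coe_iff] at hsg
      have hip : ⟪s • u - p, (0:H) - p⟫_ℝ = n ^ 2 - s * ⟪u, p⟫_ℝ := by
        simp only [zero_sub, inner_neg_right, inner_sub_left,
          real_inner_smul_left, real_inner_self_eq_norm_sq]
        ring
      rwa [hip] at hsg
    have h2 : β + r - ‖p₀‖ * n ≤ A := by
      have hm := minorant p
      rw [hgp, EReal.coe_le_coe_iff] at hm
      exact hm
    have h3 : ⟪u, p⟫_ℝ ≤ n := by
      have := real_inner_le_norm u p
      rwa [hut, one_mul] at this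
    have hA' : A ≤ r + ℓ * n := by
      nlinarith [h1, mul_le_mul_of_nonneg_left h3 hs0.le,
        mul_le_mul_of_nonneg_left (show s - n ≤ ℓ by linarith) hn0.le]
    have h4 : n ^ 2 - ‖p₀‖ * n + β ≤ s * ⟪u, p⟫_ℝ := by nlinarith
    set θ := t / n with hθ
    have hθ0 : 0 ≤ θ := by positivity
    have hθn : θ * n = t := div_mul_cancel₀ t (ne_of_gt hn0)
    have hθ1 : θ ≤ 1 := by rw [hθ, div_le_one hn0]; linarith
    refine ⟨θ • p, ?_, ?_⟩
    · have hconv := hg.2.2.1 p 0 θ (1 - θ) hθ0 (by linarith) (by ring)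
      have hsmul : θ • p + (1 - θ) • (0:H) = θ • p := by simp
      rw [hsmul, hgp, hg0, ← EReal.coe_mul, ← EReal.coe_mul, ← EReal.coe_add] at hconv
      refine le_trans hconv (EReal.coe_le_coe_iff.mpr ?_)
      have h5 : θ * A ≤ θ * (r + ℓ * n) := mul_le_mul_of_nonneg_left hA' hθ0
      have h6 : θ * (r + ℓ * n) = θ * r + ℓ * t := by
        rw [mul_add, ← mul_assoc, mul_comm θ ℓ, mul_assoc, hθn]
      linarith
    · have hw : ‖θ • p - x‖ ^ 2 = 2 * t ^ 2 - 2 * θ * t * ⟪u, p⟫_ℝ := by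
        rw [hxu, norm_sub_sq_real, norm_smul, norm_smul, real_inner_smul_left,
          real_inner_smul_right, hut, real_inner_comm, Real.norm_eq_abs,
          Real.norm_eq_abs, abs_of_nonneg hθ0, abs_of_pos ht, mul_one]
        linear_combination (θ * ‖p‖ + t) * hθn
      rw [hw, le_div_iff₀ hs0]
      have hθup : t * (n - ‖p₀‖) + t * (β / n) ≤ s * (θ * ⟪u, p⟫_ℝ) := by
        have h7 : θ * (n ^ 2 - ‖p₀‖ * n + β) ≤ θ * (s * ⟪u, p⟫_ℝ) :=
          mul_le_mul_of_nonneg_left h4 hθ0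
        calc t * (n - ‖p₀‖) + t * (β / n) = θ * (n ^ 2 - ‖p₀‖ * n + β) := by
              rw [hθ]; field_simp
          _ ≤ θ * (s * ⟪u, p⟫_ℝ) := h7
          _ = s * (θ * ⟪u, p⟫_ℝ) := by ring
      have hβn : -(β / n) ≤ |β| := by
        have hd : |β / n| ≤ |β| := by
          rw [abs_div, abs_of_pos hn0]
          exact div_le_self (abs_nonneg β) (by linarith)
        have := neg_abs_le (β / n)
        linarith
      have e1 : 2 * t * (t * (n - ‖p₀‖) + t * (β / n)) ≤ 2 * t * (s * (θ * ⟪u, p⟫_ℝ)) :=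
        mul_le_mul_of_nonneg_left hθup (by positivity)
      have e2 : 2 * t ^ 2 * (s - n) ≤ 2 * t ^ 2 * ℓ :=
        mul_le_mul_of_nonneg_left (by linarith) (by positivity)
      have e3 : 2 * t ^ 2 * (-(β / n)) ≤ 2 * t ^ 2 * |β| :=
        mul_le_mul_of_nonneg_left hβn (by positivity)
      simp only [hK]
      linarith [e1, e2, e3]
  by_contra hcon
  push_neg at hcon
  have hl := hg.2.2.2 x _ hcon
  obtain ⟨δ, hδ0, hδ⟩ := Metric.eventually_nhds_iff.mp hl
  obtain ⟨w, hw1, hw2⟩ := key (max (t + ℓ + 1) (2 * t ^ 2 * K / δ ^ 2 + 1))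
    (le_max_left _ _)
  set s := max (t + ℓ + 1) (2 * t ^ 2 * K / δ ^ 2 + 1) with hs
  have hs0 : 0 < s := lt_of_lt_of_le (by positivity) (le_max_left _ _)
  have hslt : 2 * t ^ 2 * K / s < δ ^ 2 := by
    have h6 : 2 * t ^ 2 * K / δ ^ 2 + 1 ≤ s := le_max_right _ _
    rw [div_lt_iff₀ hs0]
    have h7 : δ ^ 2 * (2 * t ^ 2 * K / δ ^ 2 + 1) = 2 * t ^ 2 * K + δ ^ 2 := by
      field_simp
    nlinarith [mul_le_mul_of_nonneg_left h6 (sq_nonneg δ), hδ0]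
  have hdist : dist w x < δ := by
    rw [dist_eq_norm]
    nlinarith [hw2, norm_nonneg (w - x), hδ0, hslt]
  exact absurd (lt_of_lt_of_le (hδ hdist) hw1) (lt_irrefl _)
end
end

section
/- Let H be a real Hilbert space and let g ∈ Γ0(H) be such that its Fenchel conjugate g* is bounded from below. If ‖x‖ ≤ ‖prox_g(x)‖ for all x ∈ H, then g is constant. -/
open scoped InnerProductSpace
noncomputable section

variable {H : Type*} [NormedAddCommGroup H] [InnerProductSpace ℝ H] [CompleteSpace H]

private lemma exists_real_of (x : EReal) (h1 : x ≠ ⊥) (h2 : x ≠ ⊤) :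
    ∃ a : ℝ, x = (a : EReal) := by
  lift x to ℝ using ⟨h2, h1⟩; exact ⟨x, rfl⟩

set_option maxHeartbeats 2000000 in
/-- If `g*` is bounded below and `‖x‖ ≤ ‖prox_g x‖` for all `x`, then `g` is constant. -/
theorem constant_of_norm_le_prox_norm
    (g : H → EReal) (hg : Gamma0 g)
    (hconj : ∃ c : ℝ, ∀ x, (c : EReal) ≤ fenchel g x)
    (proxg : H → H) (hproxg : ∀ x, IsProx g x (proxg x))
    (h : ∀ x : H, ‖x‖ ≤ ‖proxg x‖) :
    ∃ c : ℝ, ∀ x, g x = (c : EReal) := by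
  obtain ⟨⟨y0, hy0top⟩, hbot, hconv, _⟩ := hg
  obtain ⟨c, hc⟩ := hconj
  obtain ⟨B0, hB0⟩ := exists_real_of (g y0) (hbot y0) hy0top
  -- Step 0: g (proxg x) is finite
  have hfin : ∀ x : H, ∃ A : ℝ, g (proxg x) = (A : EReal) := by
    intro x
    have htop : g (proxg x) ≠ ⊤ := by
      intro hT
      have h1 := hproxg x y0
      rw [hT, hB0, EReal.top_add_coe, ← EReal.coe_add] at h1
      exact EReal.coe_ne_top _ (top_le_iff.mp h1)
    exact exists_real_of _ (hbot _) htop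
  choose A hA using hfin
  -- Step 1: subgradient inequality
  have hsub : ∀ (x v : H) (B : ℝ), g v = (B : EReal) →
      A x + ⟪x - proxg x, v - proxg x⟫_ℝ ≤ B := by
    intro x v B hB
    set p := proxg x with hp
    have hAp : g p = (A x : EReal) := hA x
    apply le_of_forall_pos_le_add
    intro ε hε
    set M : ℝ := (1:ℝ)/2 * ‖v - p‖ ^ 2 with hM
    have hM0 : 0 ≤ M := by positivity
    set t : ℝ := min 1 (ε / (M + 1)) with ht
    have ht0 : 0 < t := lt_min one_pos (div_pos hε (by linarith))
    have ht1 : t ≤ 1 := min_le_left _ _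
    have htε : t * (M + 1) ≤ ε := by
      rw [← le_div_iff₀ (by linarith : (0:ℝ) < M + 1)]
      exact min_le_right _ _
    have hcomb := hconv p v (1-t) t (by linarith) ht0.le (by ring)
    rw [show (1-t)•p + t•v = p + t•(v-p) by module, hAp, hB] at hcomb
    have hcomb' : g (p + t•(v-p)) ≤ (((1-t)*(A x) + t*B : ℝ) : EReal) := by
      refine hcomb.trans_eq ?_
      norm_cast
    have h1 := hproxg x (p + t•(v-p))
    have hchain : ((A x + (1:ℝ)/2 * ‖x - p‖ ^ 2 : ℝ) : EReal)
        ≤ (((1-t)*(A x) + t*B + (1:ℝ)/2 * ‖x - (p + t•(v-p))‖ ^ 2 : ℝ) : EReal) := by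
      calc ((A x + (1:ℝ)/2 * ‖x - p‖ ^ 2 : ℝ) : EReal)
          = g p + (((1:ℝ)/2 * ‖x - p‖ ^ 2 : ℝ) : EReal) := by rw [hAp]; norm_cast
        _ ≤ g (p + t•(v-p)) + (((1:ℝ)/2 * ‖x - (p + t•(v-p))‖ ^ 2 : ℝ) : EReal) := h1
        _ ≤ (((1-t)*(A x) + t*B : ℝ) : EReal)
            + (((1:ℝ)/2 * ‖x - (p + t•(v-p))‖ ^ 2 : ℝ) : EReal) :=
            add_le_add_left hcomb' _
        _ = _ := by norm_cast
    have hreal : A x + (1:ℝ)/2 * ‖x - p‖ ^ 2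
        ≤ (1-t)*(A x) + t*B + (1:ℝ)/2 * ‖x - (p + t•(v-p))‖ ^ 2 := by
      exact_mod_cast hchain
    rw [show x - (p + t•(v-p)) = (x - p) - t•(v-p) by module] at hreal
    have hexp : ‖(x - p) - t•(v-p)‖ ^ 2
        = ‖x - p‖ ^ 2 - 2 * (t * ⟪x - p, v - p⟫_ℝ) + (t * ‖v - p‖) ^ 2 := by
      rw [norm_sub_sq_real, real_inner_smul_right, norm_smul, Real.norm_eq_abs,
        abs_of_pos ht0]
    rw [hexp] at hreal
    -- hreal : A x + ½‖x-p‖² ≤ (1-t) A x + t B + ½(‖x-p‖² - 2 t ⟪x-p,v-p⟫ + (t‖v-p‖)²)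
    have hdiv : t * (A x + ⟪x - p, v - p⟫_ℝ) ≤ t * (B + t * M) := by nlinarith [sq_nonneg t]
    have := (mul_le_mul_iff_right₀ ht0).mp hdiv
    nlinarith [mul_nonneg ht0.le hM0]
  -- Step 2: key bound on the Moreau envelope
  obtain ⟨e, he⟩ : ∃ e : H → ℝ, ∀ w, e w = A w + (1:ℝ)/2 * ‖w - proxg w‖ ^ 2 :=
    ⟨_, fun _ => rfl⟩
  have hkey : ∀ x, e x ≤ -c := by
    intro x
    rw [he x]
    set p := proxg x with hp
    have h2 : fenchel g (x - p) ≤ ((⟪x - p, p⟫_ℝ - A x : ℝ) : EReal) := by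
      apply iSup_le
      intro v
      by_cases hvt : g v = ⊤
      · rw [hvt]
        simp
      · obtain ⟨B, hB⟩ := exists_real_of (g v) (hbot v) hvt
        rw [hB]
        have hs := hsub x v B hB
        rw [inner_sub_right] at hs
        rw [show ((⟪x - p, v⟫_ℝ : ℝ):EReal) - (B:EReal) = ((⟪x - p, v⟫_ℝ - B : ℝ):EReal)
          by norm_cast]
        exact_mod_cast (by linarith : ⟪x - p, v⟫_ℝ - B ≤ ⟪x - p, p⟫_ℝ - A x)
    have h3 : c ≤ ⟪x - p, p⟫_ℝ - A x := by exact_mod_cast (hc (x - p)).trans h2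
    have h4 : ‖x‖ ^ 2 ≤ ‖p‖ ^ 2 := by
      have := h x
      nlinarith [norm_nonneg x, norm_nonneg p]
    have h5 : ‖p‖ ^ 2 = ‖x‖ ^ 2 - 2 * ⟪x, x - p⟫_ℝ + ‖x - p‖ ^ 2 := by
      rw [show p = x - (x - p) by abel]
      rw [norm_sub_sq_real]
      rw [show x - (x - (x - p)) = x - p by abel]
    have h6 : ⟪x - p, p⟫_ℝ = ⟪x, x - p⟫_ℝ - ‖x - p‖ ^ 2 := by
      rw [show (⟪x - p, p⟫_ℝ) = ⟪x - p, x - (x - p)⟫_ℝ by rw [show x - (x - p) = p by abel]]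
      rw [inner_sub_right, real_inner_comm, real_inner_self_eq_norm_sq]
    nlinarith
  -- Step 3: convexity of the Moreau envelope
  have econv : ∀ (x y : H) (a b : ℝ), 0 ≤ a → 0 ≤ b → a + b = 1 →
      e (a•x + b•y) ≤ a * e x + b * e y := by
    intro x y a b ha hb hab
    rw [he (a•x + b•y), he x, he y]
    set z := a•x + b•y with hz
    set q := a•(proxg x) + b•(proxg y) with hq
    have h2 := hconv (proxg x) (proxg y) a b ha hb hab
    rw [hA x, hA y] at h2
    have h2' : g q ≤ ((a * A x + b * A y : ℝ) : EReal) := by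
      refine h2.trans_eq ?_; norm_cast
    have h1 := hproxg z q
    have hchain : ((A z + (1:ℝ)/2 * ‖z - proxg z‖ ^ 2 : ℝ) : EReal)
        ≤ ((a * A x + b * A y + (1:ℝ)/2 * ‖z - q‖ ^ 2 : ℝ) : EReal) := by
      calc ((A z + (1:ℝ)/2 * ‖z - proxg z‖ ^ 2 : ℝ) : EReal)
          = g (proxg z) + (((1:ℝ)/2 * ‖z - proxg z‖ ^ 2 : ℝ) : EReal) := by
            rw [hA z]; norm_cast
        _ ≤ g q + (((1:ℝ)/2 * ‖z - q‖ ^ 2 : ℝ) : EReal) := h1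
        _ ≤ ((a * A x + b * A y : ℝ) : EReal) + (((1:ℝ)/2 * ‖z - q‖ ^ 2 : ℝ) : EReal) :=
            add_le_add_left h2' _
        _ = _ := by norm_cast
    have hreal : A z + (1:ℝ)/2 * ‖z - proxg z‖ ^ 2
        ≤ a * A x + b * A y + (1:ℝ)/2 * ‖z - q‖ ^ 2 := by exact_mod_cast hchain
    have hzq : z - q = a•(x - proxg x) + b•(y - proxg y) := by
      simp only [hz, hq]; module
    have hnorm : ‖z - q‖ ≤ a * ‖x - proxg x‖ + b * ‖y - proxg y‖ := by
      rw [hzq]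
      calc ‖a•(x - proxg x) + b•(y - proxg y)‖
          ≤ ‖a•(x - proxg x)‖ + ‖b•(y - proxg y)‖ := norm_add_le _ _
        _ = a * ‖x - proxg x‖ + b * ‖y - proxg y‖ := by
            rw [norm_smul, norm_smul, Real.norm_eq_abs, Real.norm_eq_abs,
              abs_of_nonneg ha, abs_of_nonneg hb]
    have hsq : ‖z - q‖ ^ 2 ≤ a * ‖x - proxg x‖ ^ 2 + b * ‖y - proxg y‖ ^ 2 := by
      nlinarith [norm_nonneg (z - q), norm_nonneg (x - proxg x), norm_nonneg (y - proxg y),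
        sq_nonneg (‖x - proxg x‖ - ‖y - proxg y‖), mul_nonneg ha hb]
    nlinarith
  -- Step 4: e is constant (bounded-above convex function)
  have hconst : ∀ x y : H, e y ≤ e x := by
    intro x y
    apply le_of_forall_pos_le_add
    intro ε hε
    have hCx : 0 ≤ -c - e x := by have := hkey x; linarith
    set b : ℝ := min 1 (ε / (-c - e x + 1)) with hb
    have hb0 : 0 < b := lt_min one_pos (div_pos hε (by linarith))
    have hb1 : b ≤ 1 := min_le_left _ _
    have hbε : b * (-c - e x + 1) ≤ ε := by
      rw [← le_div_iff₀ (by linarith : (0:ℝ) < -c - e x + 1)]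
      exact min_le_right _ _
    have hcombo : (1-b)•x + b•(x + b⁻¹•(y-x)) = y := by
      rw [smul_add, smul_smul, mul_inv_cancel₀ hb0.ne', one_smul]
      module
    have hek := econv x (x + b⁻¹•(y-x)) (1-b) b (by linarith) hb0.le (by ring)
    rw [hcombo] at hek
    have := hkey (x + b⁻¹•(y-x))
    have h7 := mul_le_mul_of_nonneg_left this hb0.le
    nlinarith [h7]
  -- Step 5: proxg is the identity
  have hpid : ∀ x, proxg x = x := by
    intro x
    have h1 := hproxg (proxg x) (proxg x)
    rw [hA (proxg x), hA x] at h1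
    have h1' : ((A (proxg x) + (1:ℝ)/2 * ‖proxg x - proxg (proxg x)‖ ^ 2 : ℝ) : EReal)
        ≤ ((A x + (1:ℝ)/2 * ‖proxg x - proxg x‖ ^ 2 : ℝ) : EReal) := by
      refine Eq.trans_le (by norm_cast) (h1.trans_eq ?_); norm_cast
    have h1r : A (proxg x) + (1:ℝ)/2 * ‖proxg x - proxg (proxg x)‖ ^ 2
        ≤ A x + (1:ℝ)/2 * ‖proxg x - proxg x‖ ^ 2 := by exact_mod_cast h1'
    rw [sub_self, norm_zero] at h1r
    have h2 := hconst (proxg x) x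
    rw [he x, he (proxg x)] at h2
    have : ‖x - proxg x‖ ^ 2 ≤ 0 := by nlinarith
    have hn0 : ‖x - proxg x‖ = 0 := by nlinarith [norm_nonneg (x - proxg x), sq_nonneg ‖x - proxg x‖]
    have := norm_eq_zero.mp hn0
    rw [sub_eq_zero] at this
    exact this.symm
  -- Step 6: quadratic bound  g x ≤ g y + ½‖x-y‖², then bisection
  have hgG : ∀ x, g x = (A x : EReal) := by
    intro x
    have := hA x
    rwa [hpid x] at this
  have hq : ∀ x y : H, A x ≤ A y + (1:ℝ)/2 * ‖x - y‖ ^ 2 := by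
    intro x y
    have h1 := hproxg x y
    rw [hpid x] at h1
    rw [hgG x, hgG y] at h1
    have h1' : ((A x + (1:ℝ)/2 * ‖x - x‖ ^ 2 : ℝ) : EReal)
        ≤ ((A y + (1:ℝ)/2 * ‖x - y‖ ^ 2 : ℝ) : EReal) := by
      refine Eq.trans_le (by norm_cast) (h1.trans_eq ?_); norm_cast
    have h1r : A x + (1:ℝ)/2 * ‖x - x‖ ^ 2 ≤ A y + (1:ℝ)/2 * ‖x - y‖ ^ 2 := by
      exact_mod_cast h1'
    rw [sub_self, norm_zero] at h1r
    nlinarith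
  have hhalf : ∀ K : ℝ, (∀ x y : H, A x ≤ A y + K * ‖x - y‖ ^ 2) →
      ∀ x y : H, A x ≤ A y + (K/2) * ‖x - y‖ ^ 2 := by
    intro K hK x y
    set m := (2:ℝ)⁻¹ • (x + y) with hm
    have hxm : x - m = (2:ℝ)⁻¹ • (x - y) := by simp only [hm]; module
    have hmy : m - y = (2:ℝ)⁻¹ • (x - y) := by simp only [hm]; module
    have h1 := hK x m
    have h2 := hK m y
    rw [hxm] at h1
    rw [hmy] at h2
    have e1 : K * ((2:ℝ)⁻¹ * ‖x - y‖) ^ 2 = K/4 * ‖x - y‖ ^ 2 := by ring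
    rw [norm_smul, Real.norm_eq_abs, show |(2:ℝ)⁻¹| = (2:ℝ)⁻¹ by norm_num, e1] at h1
    rw [norm_smul, Real.norm_eq_abs, show |(2:ℝ)⁻¹| = (2:ℝ)⁻¹ by norm_num, e1] at h2
    linarith
  have hiter : ∀ k : ℕ, ∀ x y : H, A x ≤ A y + ((1:ℝ)/2 * ((1:ℝ)/2)^k) * ‖x - y‖ ^ 2 := by
    intro k
    induction k with
    | zero => simpa using hq
    | succ n ih =>
      intro x y
      have := hhalf _ ih x y
      calc A x ≤ A y + ((1:ℝ)/2 * ((1:ℝ)/2)^n / 2) * ‖x - y‖ ^ 2 := this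
        _ = A y + ((1:ℝ)/2 * ((1:ℝ)/2)^(n+1)) * ‖x - y‖ ^ 2 := by ring
  have hAle : ∀ x y : H, A x ≤ A y := by
    intro x y
    apply le_of_forall_pos_le_add
    intro ε hε
    set N : ℝ := (1:ℝ)/2 * ‖x - y‖ ^ 2 with hN
    have hN0 : 0 ≤ N := by positivity
    obtain ⟨k, hk⟩ := exists_pow_lt_of_lt_one
      (show (0:ℝ) < ε / (N + 1) by positivity) (by norm_num : (1:ℝ)/2 < 1)
    have := hiter k x y
    have hk' : ((1:ℝ)/2)^k * (N + 1) < ε := by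
      rw [← lt_div_iff₀ (by linarith : (0:ℝ) < N + 1)]
      exact hk
    have hp0 : (0:ℝ) ≤ ((1:ℝ)/2)^k := by positivity
    nlinarith
  refine ⟨A 0, fun x => ?_⟩
  rw [hgG x]
  exact_mod_cast le_antisymm (hAle x 0) (hAle 0 x)
end
end
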